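/- arXiv:2512.21492 — 6 statements merged into one kernel-verified Lean document; each statement's English description precedes it below -/
import Mathlib

section
/- Let 0 < η ≤ ∞, 1 ≤ q < ∞, and let w : (0,∞) → (0,∞) be locally Lipschitz with lim_{t→0+} w(t) = 0. Define φ_w(t) = inf_{t ≤ s ≤ η} w(s) for 0 ≤ t ≤ η. Then for every compactly supported C¹ function u on (0,η), one has ∫₀^η |u'(t)| w(t) dt ≥ ( ∫₀^η |u(t)|^q (d/dt)(φ_w(t)^q) dt )^{1/q}. -/
open MeasureTheory Set Filter Topology
open scoped ENNReal

private lemma aux_deriv_nonneg {g : ℝ → ℝ} (hg : Monotone g) (x : ℝ) : 0 ≤ deriv g x := by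
  by_cases hdiff : DifferentiableAt ℝ g x
  · have h := hasDerivAt_iff_tendsto_slope.1 hdiff.hasDerivAt
    have h2 : Tendsto (slope g x) (𝓝[>] x) (𝓝 (deriv g x)) :=
      h.mono_left (nhdsWithin_mono _ fun y hy => ne_of_gt hy)
    refine ge_of_tendsto h2 ?_
    filter_upwards [self_mem_nhdsWithin] with y hy
    rw [slope_def_field]
    exact div_nonneg (sub_nonneg.2 (hg (le_of_lt hy))) (sub_nonneg.2 (le_of_lt hy))
  · rw [deriv_zero_of_not_differentiableAt hdiff]

private lemma aux_stieltjes (g : StieltjesFunction ℝ) {F : ℝ → ℝ≥0∞} (hF : Measurable F)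
    {s : Set ℝ} (hs : MeasurableSet s) :
    ∫⁻ t in s, F t * ENNReal.ofReal (deriv g t) ≤ ∫⁻ t in s, F t ∂g.measure := by
  have h1 : ∀ᵐ t ∂(volume.restrict s),
      F t * ENNReal.ofReal (deriv (⇑g) t) ≤ F t * g.measure.rnDeriv volume t := by
    refine ae_restrict_of_ae ?_
    filter_upwards [g.ae_hasDerivAt] with t ht
    rw [ht.deriv]
    exact mul_le_mul_right ENNReal.ofReal_toReal_le _
  calc ∫⁻ t in s, F t * ENNReal.ofReal (deriv g t)
      ≤ ∫⁻ t in s, F t * g.measure.rnDeriv volume t := lintegral_mono_ae h1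
    _ = ∫⁻ t in s, F t ∂(volume.withDensity (g.measure.rnDeriv volume)) := by
        rw [restrict_withDensity hs,
          lintegral_withDensity_eq_lintegral_mul _ (Measure.measurable_rnDeriv _ _) hF]
        simp only [Pi.mul_apply, mul_comm]
    _ ≤ ∫⁻ t in s, F t ∂g.measure := by
        exact lintegral_mono' (Measure.restrict_mono Subset.rfl
          (Measure.withDensity_rnDeriv_le _ _)) le_rfl

private lemma aux_rpow_cont {p : ℝ} (hp : 0 ≤ p) : Continuous fun x : ℝ => x ^ p := by
  rcases eq_or_lt_of_le hp with h | h
  · simp only [← h, Real.rpow_zero]; exact continuous_const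
  · rw [continuous_iff_continuousAt]
    intro x
    exact Real.continuousAt_rpow_const x p (Or.inr h.le)

private lemma aux_ofReal_eq (c : ℝ) (hc : 0 ≤ c) :
    ENNReal.ofReal c = ∫⁻ l in Ioi (0:ℝ), (if l < c then (1:ℝ≥0∞) else 0) := by
  have : (fun l => if l < c then (1:ℝ≥0∞) else 0) = (Iio c).indicator (fun _ => 1) := by
    funext l; simp [Set.indicator_apply, mem_Iio]
  rw [this, lintegral_indicator measurableSet_Iio]
  rw [Measure.restrict_restrict measurableSet_Iio]
  simp only [lintegral_const, one_mul, Measure.restrict_apply MeasurableSet.univ,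
    Set.univ_inter]
  rw [Set.Iio_inter_Ioi, Real.volume_Ioo]
  simp

private lemma aux_hardy {q : ℝ} (hq : 1 ≤ q) {ψ : ℝ → ℝ} (hψa : Antitone ψ)
    (hψ0 : ∀ t, 0 ≤ ψ t) {A : ℝ} (hA : 0 ≤ A) :
    ∫⁻ t in Ioc (0:ℝ) A, ENNReal.ofReal (q * t ^ (q-1)) * ENNReal.ofReal (ψ t ^ q)
      ≤ ENNReal.ofReal ((∫ s in (0:ℝ)..A, ψ s) ^ q) := by
  have hq0 : (0:ℝ) < q := lt_of_lt_of_le one_pos hq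
  have hqne : q ≠ 0 := ne_of_gt hq0
  set Ψ : ℝ → ℝ := fun r => ∫ s in (0:ℝ)..r, ψ s with hΨdef
  have hInt : ∀ a b : ℝ, IntervalIntegrable ψ volume a b := fun a b => hψa.intervalIntegrable
  have hΨc : Continuous Ψ := intervalIntegral.continuous_primitive hInt 0
  have hΨm : Monotone Ψ := by
    intro r₁ r₂ hr
    have hadd := intervalIntegral.integral_add_adjacent_intervals (hInt 0 r₁) (hInt r₁ r₂)
    have hnn : 0 ≤ ∫ s in r₁..r₂, ψ s :=
      intervalIntegral.integral_nonneg hr (fun x _ => hψ0 x)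
    simp only [hΨdef]; linarith
  have hΨ0 : Ψ 0 = 0 := intervalIntegral.integral_same
  have hΨnn : ∀ r, 0 ≤ Ψ (max r 0) := fun r =>
    le_trans (le_of_eq hΨ0.symm) (hΨm (le_max_right r 0))
  let g₂ : StieltjesFunction ℝ :=
    { toFun := fun r => Ψ (max r 0) ^ q
      mono' := fun r₁ r₂ hr =>
        Real.rpow_le_rpow (hΨnn r₁) (hΨm (max_le_max hr le_rfl)) hq0.le
      right_continuous' := fun x =>
        (((hΨc.comp (continuous_id.max continuous_const)).rpow_const
          (fun y => Or.inr hq0.le)).continuousAt).continuousWithinAt }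
  have hg₂coe : ∀ r, g₂ r = Ψ (max r 0) ^ q := fun r => rfl
  have hmeasIoc : g₂.measure (Ioc (0:ℝ) A) = ENNReal.ofReal (Ψ A ^ q) := by
    rw [StieltjesFunction.measure_Ioc, hg₂coe, hg₂coe, max_eq_left hA, max_self, hΨ0,
      Real.zero_rpow hqne, sub_zero]
  -- a.e. derivative bound
  have hae : ∀ᵐ t ∂(volume.restrict (Ioc (0:ℝ) A)),
      ENNReal.ofReal (q * t ^ (q-1)) * ENNReal.ofReal (ψ t ^ q)
        ≤ (1:ℝ≥0∞) * ENNReal.ofReal (deriv g₂ t) := by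
    have hcz : (volume : Measure ℝ) {x | ¬ContinuousAt ψ x} = 0 :=
      (hψa.countable_not_continuousAt).measure_zero _
    have hae0 : ∀ᵐ t : ℝ, ContinuousAt ψ t := by
      rw [MeasureTheory.ae_iff]; simpa using hcz
    filter_upwards [ae_restrict_of_ae hae0, ae_restrict_mem measurableSet_Ioc] with t hcont ht
    -- derivative of g₂ at t
    have hΨd : HasDerivAt Ψ (ψ t) t :=
      intervalIntegral.integral_hasDerivAt_right (hInt 0 t)
        ((hψa.measurable.stronglyMeasurable).stronglyMeasurableAtFilter) hcont
    have hpow : HasDerivAt (fun y : ℝ => y ^ q) (q * (Ψ t) ^ (q-1)) (Ψ t) :=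
      Real.hasDerivAt_rpow_const (Or.inr hq)
    have hcomp : HasDerivAt (fun r => Ψ r ^ q) (q * (Ψ t) ^ (q-1) * ψ t) t :=
      hpow.comp t hΨd
    have heq : (fun r => Ψ (max r 0) ^ q) =ᶠ[𝓝 t] (fun r => Ψ r ^ q) := by
      filter_upwards [Ioi_mem_nhds ht.1] with y hy
      rw [max_eq_left (le_of_lt hy)]
    have hg₂d : HasDerivAt (⇑g₂) (q * (Ψ t) ^ (q-1) * ψ t) t :=
      hcomp.congr_of_eventuallyEq heq
    rw [hg₂d.deriv, one_mul]
    -- now the real inequality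
    have htψ : t * ψ t ≤ Ψ t := by
      have h1 : ∫ s in (0:ℝ)..t, ψ t ≤ ∫ s in (0:ℝ)..t, ψ s := by
        apply intervalIntegral.integral_mono_on ht.1.le
          (intervalIntegrable_const) (hInt 0 t)
        intro x hx
        exact hψa hx.2
      simpa [mul_comm] using h1
    have hkey : q * t ^ (q-1) * ψ t ^ q ≤ q * (Ψ t) ^ (q-1) * ψ t := by
      rcases eq_or_lt_of_le (hψ0 t) with hz | hz
      · rw [← hz]
        simp only [Real.zero_rpow hqne, mul_zero]
        exact le_rfl
      · have h1 : ψ t ^ q = ψ t ^ (q-1) * ψ t := by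
          rw [← Real.rpow_add_one (ne_of_gt hz)]; ring_nf
        rw [h1]
        have h2 : t ^ (q-1) * ψ t ^ (q-1) ≤ (Ψ t) ^ (q-1) := by
          rw [← Real.mul_rpow ht.1.le (hψ0 t)]
          exact Real.rpow_le_rpow (mul_nonneg ht.1.le (hψ0 t)) htψ (by linarith)
        calc q * t ^ (q-1) * (ψ t ^ (q-1) * ψ t)
            = q * (t ^ (q-1) * ψ t ^ (q-1)) * ψ t := by ring
          _ ≤ q * (Ψ t) ^ (q-1) * ψ t := by
              apply mul_le_mul_of_nonneg_right _ (hψ0 t)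
              exact mul_le_mul_of_nonneg_left h2 hq0.le
    calc ENNReal.ofReal (q * t ^ (q-1)) * ENNReal.ofReal (ψ t ^ q)
        = ENNReal.ofReal (q * t ^ (q-1) * ψ t ^ q) := by
          rw [← ENNReal.ofReal_mul (mul_nonneg hq0.le (Real.rpow_nonneg ht.1.le _))]
      _ ≤ ENNReal.ofReal (q * (Ψ t) ^ (q-1) * ψ t) := ENNReal.ofReal_le_ofReal hkey
  calc ∫⁻ t in Ioc (0:ℝ) A, ENNReal.ofReal (q * t ^ (q-1)) * ENNReal.ofReal (ψ t ^ q)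
      ≤ ∫⁻ t in Ioc (0:ℝ) A, (1:ℝ≥0∞) * ENNReal.ofReal (deriv g₂ t) := lintegral_mono_ae hae
    _ ≤ ∫⁻ _t in Ioc (0:ℝ) A, (1:ℝ≥0∞) ∂g₂.measure :=
        aux_stieltjes g₂ measurable_const measurableSet_Ioc
    _ = g₂.measure (Ioc (0:ℝ) A) := by simp
    _ = ENNReal.ofReal (Ψ A ^ q) := hmeasIoc

private lemma aux_layer {ψ : ℝ → ℝ} (hψa : Antitone ψ) (hψ0 : ∀ t, 0 ≤ ψ t) {A : ℝ} (hA : 0 ≤ A)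
    {ρ : ℝ → ℝ≥0∞} (hkey : ∀ t ∈ Ioc (0:ℝ) A, ∀ l, 0 < l → l < ψ t → ENNReal.ofReal t ≤ ρ l) :
    ENNReal.ofReal (∫ s in (0:ℝ)..A, ψ s) ≤ ∫⁻ l in Ioi (0:ℝ), ρ l := by
  have hInt : IntegrableOn ψ (Ioc 0 A) volume :=
    (intervalIntegrable_iff_integrableOn_Ioc_of_le hA).1 hψa.intervalIntegrable
  have h1 : ENNReal.ofReal (∫ s in (0:ℝ)..A, ψ s)
      = ∫⁻ t in Ioc (0:ℝ) A, ENNReal.ofReal (ψ t) := by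
    rw [intervalIntegral.integral_of_le hA,
      ofReal_integral_eq_lintegral_ofReal hInt (ae_of_all _ hψ0)]
  have h2 : ∀ t : ℝ, ENNReal.ofReal (ψ t)
      = ∫⁻ l in Ioi (0:ℝ), (if l < ψ t then (1:ℝ≥0∞) else 0) :=
    fun t => aux_ofReal_eq (ψ t) (hψ0 t)
  rw [h1]
  have hswap : ∫⁻ t in Ioc (0:ℝ) A, ∫⁻ l in Ioi (0:ℝ), (if l < ψ t then (1:ℝ≥0∞) else 0)
      = ∫⁻ l in Ioi (0:ℝ), ∫⁻ t in Ioc (0:ℝ) A, (if l < ψ t then (1:ℝ≥0∞) else 0) := by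
    apply lintegral_lintegral_swap
    apply Measurable.aemeasurable
    have hset : MeasurableSet {p : ℝ × ℝ | p.2 < ψ p.1} :=
      measurableSet_lt measurable_snd (hψa.measurable.comp measurable_fst)
    exact Measurable.ite hset measurable_const measurable_const
  calc ∫⁻ t in Ioc (0:ℝ) A, ENNReal.ofReal (ψ t)
      = ∫⁻ t in Ioc (0:ℝ) A, ∫⁻ l in Ioi (0:ℝ), (if l < ψ t then (1:ℝ≥0∞) else 0) := by
        exact lintegral_congr fun t => h2 t
    _ = ∫⁻ l in Ioi (0:ℝ), ∫⁻ t in Ioc (0:ℝ) A, (if l < ψ t then (1:ℝ≥0∞) else 0) := hswap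
    _ ≤ ∫⁻ l in Ioi (0:ℝ), ρ l := by
        apply lintegral_mono_ae
        filter_upwards [ae_restrict_mem measurableSet_Ioi] with l hl
        have hset' : MeasurableSet {t : ℝ | l < ψ t} := hψa.measurable measurableSet_Ioi
        have hind : (fun t => if l < ψ t then (1:ℝ≥0∞) else 0)
            = ({t : ℝ | l < ψ t}).indicator (fun _ => 1) := by
          funext t; simp [Set.indicator_apply]
        rw [hind, lintegral_indicator hset', setLIntegral_one,
          Measure.restrict_apply hset']
        by_cases hρ : ρ l = ⊤
        · rw [hρ]; exact le_top
        · have hsub : {t : ℝ | l < ψ t} ∩ Ioc 0 A ⊆ Ioc 0 ((ρ l).toReal) := by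
            rintro t ⟨ht1, ht2⟩
            exact ⟨ht2.1, (ENNReal.ofReal_le_iff_le_toReal hρ).1 (hkey t ht2 l hl ht1)⟩
          calc volume ({t : ℝ | l < ψ t} ∩ Ioc 0 A) ≤ volume (Ioc 0 ((ρ l).toReal)) :=
                measure_mono hsub
            _ ≤ ρ l := by
                rw [Real.volume_Ioc, sub_zero]
                exact le_of_eq (ENNReal.ofReal_toReal hρ)
theorem stmt0 (η : ℝ≥0∞) (hη : 0 < η) (q : ℝ) (hq : 1 ≤ q)
    (w : ℝ → ℝ) (hwpos : ∀ t : ℝ, 0 < t → 0 < w t)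
    (hwlip : ∀ a b : ℝ, 0 < a → ∃ K : NNReal, LipschitzOnWith K w (Set.Icc a b))
    (hw0 : Tendsto w (nhdsWithin 0 (Set.Ioi 0)) (nhds 0))
    (φ : ℝ → ℝ)
    (hφ : ∀ t : ℝ, φ t = sInf (w '' {s : ℝ | t ≤ s ∧ 0 < s ∧ ENNReal.ofReal s ≤ η}))
    (u : ℝ → ℝ) (hu : ContDiff ℝ 1 u) (husupp : HasCompactSupport u)
    (husub : tsupport u ⊆ {t : ℝ | 0 < t ∧ ENNReal.ofReal t < η}) :
    ∫ t in {t : ℝ | 0 < t ∧ ENNReal.ofReal t < η}, |deriv u t| * w t ≥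
      (∫ t in {t : ℝ | 0 < t ∧ ENNReal.ofReal t < η},
        |u t| ^ q * deriv (fun s => φ s ^ q) t) ^ (1 / q) := by
  have hq0 : (0:ℝ) < q := lt_of_lt_of_le one_pos hq
  have hqne : q ≠ 0 := ne_of_gt hq0
  set S : Set ℝ := {t : ℝ | 0 < t ∧ ENNReal.ofReal t < η} with hSdef
  have hSm : MeasurableSet S := by
    have hS2 : S = Ioi 0 ∩ (fun t : ℝ => ENNReal.ofReal t) ⁻¹' (Iio η) := by
      ext t; constructor <;> exact fun h => ⟨h.1, h.2⟩
    rw [hS2]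
    exact measurableSet_Ioi.inter (ENNReal.continuous_ofReal.measurable measurableSet_Iio)
  by_cases hK0 : tsupport u = ∅
  · have hu0 : ∀ t, u t = 0 := fun t =>
      image_eq_zero_of_notMem_tsupport (by simp [hK0])
    have hdu0 : ∀ t, deriv u t = 0 := by
      intro t
      by_contra hne
      have ht : t ∈ tsupport u := support_deriv_subset (by simpa [Function.mem_support] using hne)
      simp [hK0] at ht
    have h1 : ∫ t in S, |deriv u t| * w t = 0 := by
      simp only [hdu0, abs_zero, zero_mul, integral_zero]
    have h2 : (∫ t in S, |u t| ^ q * deriv (fun s => φ s ^ q) t) = 0 := by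
      simp only [hu0, abs_zero, Real.zero_rpow hqne, zero_mul, integral_zero]
    rw [h1, h2, Real.zero_rpow (one_div_ne_zero hqne)]
  -- MAIN CASE
  have hKne : (tsupport u).Nonempty := Set.nonempty_iff_ne_empty.2 hK0
  have hKcomp : IsCompact (tsupport u) := husupp
  have hKS : tsupport u ⊆ S := husub
  have hsK_mem : sSup (tsupport u) ∈ tsupport u := hKcomp.sSup_mem hKne
  have hk0_mem : sInf (tsupport u) ∈ tsupport u := hKcomp.sInf_mem hKne
  set K := tsupport u with hKdef
  set sK := sSup K with hsKdef
  set k₀ := sInf K with hk₀def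
  have hk₀pos : 0 < k₀ := (hKS hk0_mem).1
  have hsKS : sK ∈ S := hKS hsK_mem
  have hsKpos : 0 < sK := hsKS.1
  have hK_le_sK : ∀ t ∈ K, t ≤ sK := fun t ht => le_csSup hKcomp.bddAbove ht
  have hk₀_le_K : ∀ t ∈ K, k₀ ≤ t := fun t ht => csInf_le hKcomp.bddBelow ht
  -- choose b
  obtain ⟨b, hsKb, hbη⟩ : ∃ b : ℝ, sK < b ∧ ENNReal.ofReal b < η := by
    rcases eq_or_ne η ⊤ with rfl | hηtop
    · exact ⟨sK + 1, by linarith, ENNReal.ofReal_lt_top⟩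
    · have hηpos : 0 < η.toReal :=
        ENNReal.toReal_pos (ne_of_gt hη) hηtop
      have h1 : sK < η.toReal := by
        have h2 := hsKS.2
        rw [← ENNReal.ofReal_toReal hηtop, ENNReal.ofReal_lt_ofReal_iff hηpos] at h2
        exact h2
      refine ⟨(sK + η.toReal)/2, by linarith, ?_⟩
      have h2 : (sK + η.toReal)/2 < η.toReal := by linarith
      calc ENNReal.ofReal ((sK + η.toReal)/2) < ENNReal.ofReal η.toReal := by
            rw [ENNReal.ofReal_lt_ofReal_iff hηpos]; exact h2
        _ = η := ENNReal.ofReal_toReal hηtop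
  have hb0 : 0 < b := lt_trans hsKpos hsKb
  -- φ basic facts
  have hbdd : ∀ t : ℝ, BddBelow (w '' {s : ℝ | t ≤ s ∧ 0 < s ∧ ENNReal.ofReal s ≤ η}) := by
    intro t
    refine ⟨0, ?_⟩
    rintro x ⟨s, hs, rfl⟩
    exact (hwpos s hs.2.1).le
  have hφ_nonneg : ∀ t, 0 ≤ φ t := by
    intro t
    rw [hφ t]
    apply Real.sInf_nonneg
    rintro x ⟨s, hs, rfl⟩
    exact (hwpos s hs.2.1).le
  have hφ_le_w : ∀ t, 0 < t → ENNReal.ofReal t ≤ η → φ t ≤ w t := by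
    intro t ht hη'
    rw [hφ t]
    exact csInf_le (hbdd t) ⟨t, ⟨le_rfl, ht, hη'⟩, rfl⟩
  have hφ_mono : ∀ t₁ t₂ : ℝ, t₁ ≤ t₂ → t₂ ≤ b → φ t₁ ≤ φ t₂ := by
    intro t₁ t₂ h12 h2b
    rw [hφ t₁, hφ t₂]
    apply csInf_le_csInf (hbdd t₁)
    · exact ⟨w b, b, ⟨h2b, hb0, hbη.le⟩, rfl⟩
    · apply Set.image_mono
      rintro s ⟨hs1, hs2, hs3⟩
      exact ⟨le_trans h12 hs1, hs2, hs3⟩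
  have hφ_zero : ∀ t : ℝ, t ≤ 0 → φ t = 0 := by
    intro t ht
    refine le_antisymm ?_ (hφ_nonneg t)
    by_contra hpos
    push_neg at hpos
    have hev1 : ∀ᶠ s in 𝓝[>] (0:ℝ), w s < φ t :=
      hw0.eventually (Filter.Tendsto.eventually_lt_const hpos tendsto_id)
    have hev2 : ∀ᶠ s in 𝓝[>] (0:ℝ), s < b :=
      eventually_nhdsWithin_of_eventually_nhds (Filter.Tendsto.eventually_lt_const hb0 tendsto_id)
    obtain ⟨s, hs1, hs2⟩ := (hev1.and (hev2.and self_mem_nhdsWithin)).exists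
    have hmem : w s ∈ w '' {s' : ℝ | t ≤ s' ∧ 0 < s' ∧ ENNReal.ofReal s' ≤ η} :=
      ⟨s, ⟨le_trans ht (le_of_lt hs2.2), hs2.2, le_trans (ENNReal.ofReal_le_ofReal hs2.1.le) hbη.le⟩, rfl⟩
    have : φ t ≤ w s := by rw [hφ t]; exact csInf_le (hbdd t) hmem
    exact absurd (lt_of_le_of_lt this hs1) (lt_irrefl _)
  -- Lipschitz of φ on [ε, b]
  have hφlip : ∀ ε : ℝ, 0 < ε → ε ≤ b → ∃ L : NNReal, LipschitzOnWith L φ (Icc ε b) := by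
    intro ε hε hεb
    obtain ⟨L, hL⟩ := hwlip ε b hε
    refine ⟨L, LipschitzOnWith.of_dist_le_mul ?_⟩
    have key : ∀ t₁ ∈ Icc ε b, ∀ t₂ ∈ Icc ε b, t₁ ≤ t₂ → φ t₂ - φ t₁ ≤ L * (t₂ - t₁) := by
      intro t₁ ht₁ t₂ ht₂ h12
      have hLnn : (0:ℝ) ≤ L := L.2
      have hmain : φ t₂ - L * (t₂ - t₁) ≤ φ t₁ := by
        rw [hφ t₁]
        refine le_csInf ⟨w b, ⟨b, ⟨ht₁.2, hb0, hbη.le⟩, rfl⟩⟩ ?_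
        rintro x ⟨s, ⟨hs1, hs2, hs3⟩, rfl⟩
        rcases le_or_gt t₂ s with hcase | hcase
        · have h1 : φ t₂ ≤ w s := by
            rw [hφ t₂]; exact csInf_le (hbdd t₂) ⟨s, ⟨hcase, hs2, hs3⟩, rfl⟩
          nlinarith
        · have hsmem : s ∈ Icc ε b := ⟨le_trans ht₁.1 hs1, le_trans hcase.le ht₂.2⟩
          have h1 := hL.dist_le_mul s hsmem t₂ ht₂
          rw [Real.dist_eq, Real.dist_eq] at h1
          have h2 : φ t₂ ≤ w t₂ := hφ_le_w t₂ (lt_of_lt_of_le hε ht₂.1)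
            (le_trans (ENNReal.ofReal_le_ofReal ht₂.2) hbη.le)
          have h3 : |s - t₂| = t₂ - s := by rw [abs_sub_comm, abs_of_nonneg (by linarith)]
          have h4 : w t₂ - w s ≤ L * (t₂ - s) := by
            have h5 := abs_le.1 h1
            rw [h3] at h5
            linarith [h5.1]
          have h5 : (L:ℝ) * (t₂ - s) ≤ L * (t₂ - t₁) :=
            mul_le_mul_of_nonneg_left (by linarith) L.2
          linarith
      linarith
    intro t₁ ht₁ t₂ ht₂
    rw [Real.dist_eq, Real.dist_eq]
    rcases le_total t₁ t₂ with h12 | h21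
    · have h1 := key t₁ ht₁ t₂ ht₂ h12
      have h2 : φ t₁ ≤ φ t₂ := hφ_mono t₁ t₂ h12 ht₂.2
      rw [abs_of_nonpos (by linarith), abs_of_nonpos (by linarith)]
      linarith
    · have h1 := key t₂ ht₂ t₁ ht₁ h21
      have h2 : φ t₂ ≤ φ t₁ := hφ_mono t₂ t₁ h21 ht₁.2
      rw [abs_of_nonneg (by linarith), abs_of_nonneg (by linarith)]
      linarith
  -- the truncated φ
  set φt : ℝ → ℝ := fun t => φ (min t b) with hφtdef
  have hφt_eqb : ∀ t : ℝ, t ≤ b → φt t = φ t := fun t ht => by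
    show φ (min t b) = φ t
    rw [min_eq_left ht]
  have hφt_nonneg : ∀ t, 0 ≤ φt t := fun t => hφ_nonneg _
  have hφt_mono : Monotone φt := fun t₁ t₂ h12 =>
    hφ_mono (min t₁ b) (min t₂ b) (min_le_min h12 le_rfl) (min_le_right _ _)
  have hφt_le_b : ∀ t, φt t ≤ φ b := fun t => by
    rw [hφtdef]; exact hφ_mono _ _ (min_le_right t b) le_rfl
  have hφt_cont : Continuous φt := by
    rw [continuous_iff_continuousAt]
    intro x
    rcases lt_trichotomy x 0 with hx | hx | hx
    · have hev : ∀ᶠ y in 𝓝 x, φt y = 0 := by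
        filter_upwards [Iio_mem_nhds hx] with y hy
        rw [hφtdef]
        exact hφ_zero _ (min_le_of_left_le hy.le)
      exact ContinuousAt.congr continuousAt_const (hev.mono fun y hy => hy.symm)
    · subst hx
      have h0 : φt 0 = 0 := by rw [hφt_eqb 0 hb0.le]; exact hφ_zero 0 le_rfl
      rw [continuousAt_iff_continuous_left_right]
      constructor
      · have hev : ∀ᶠ y in 𝓝[Iic (0:ℝ)] (0:ℝ), φt y = 0 := by
          filter_upwards [self_mem_nhdsWithin] with y hy
          show φ (min y b) = 0
          exact hφ_zero _ (min_le_of_left_le hy)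
        unfold ContinuousWithinAt
        rw [h0]
        exact (tendsto_congr' hev).2 tendsto_const_nhds
      · rw [← continuousWithinAt_Ioi_iff_Ici]
        unfold ContinuousWithinAt
        rw [h0]
        refine squeeze_zero' (eventually_nhdsWithin_of_forall fun t ht => hφt_nonneg t) ?_ hw0
        filter_upwards [mem_nhdsWithin_of_mem_nhds (Iio_mem_nhds hb0),
          self_mem_nhdsWithin] with t htb ht0
        rw [hφt_eqb t (le_of_lt htb)]
        exact hφ_le_w t ht0 (le_trans (ENNReal.ofReal_le_ofReal (le_of_lt htb)) hbη.le)
    · rcases lt_or_ge b x with hbx | hxb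
      · have hev : ∀ᶠ y in 𝓝 x, φt y = φ b := by
          filter_upwards [Ioi_mem_nhds hbx] with y hy
          simp only [hφtdef, min_eq_right (le_of_lt (show b < y from hy))]
        exact ContinuousAt.congr continuousAt_const (hev.mono fun y hy => hy.symm)
      · obtain ⟨L, hL⟩ := hφlip (x/2) (by linarith) (by linarith)
        have hc : ContinuousOn φt (Ici (x/2)) := by
          apply (hL.continuousOn).comp ((continuous_id.min continuous_const).continuousOn)
          intro y hy
          exact ⟨le_min hy (by linarith), min_le_right _ _⟩
        exact hc.continuousAt (Ici_mem_nhds (by linarith))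
  -- the Stieltjes function h
  let SF : StieltjesFunction ℝ :=
    { toFun := fun t => φt t ^ q
      mono' := fun t₁ t₂ h12 => Real.rpow_le_rpow (hφt_nonneg t₁) (hφt_mono h12) hq0.le
      right_continuous' := fun x =>
        ((hφt_cont.rpow_const (fun y => Or.inr hq0.le)).continuousAt).continuousWithinAt }
  have hSFcoe : ∀ t, SF t = φt t ^ q := fun t => rfl
  have hSFmono : Monotone (⇑SF) := SF.mono'
  have hSFbot : Tendsto (⇑SF) atBot (𝓝 0) := by
    have hev : (⇑SF) =ᶠ[atBot] (fun _ => (0:ℝ)) := by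
      rw [Filter.EventuallyEq, eventually_atBot]
      refine ⟨0, fun y hy => ?_⟩
      have hz : φt y = 0 := by
        show φ (min y b) = 0
        exact hφ_zero _ (min_le_of_left_le hy)
      show SF y = 0
      rw [hSFcoe, hz, Real.zero_rpow hqne]
    exact tendsto_const_nhds.congr' hev.symm
  have hSF_Iic : ∀ x : ℝ, SF.measure (Iic x) = ENNReal.ofReal (φt x ^ q) := by
    intro x
    rw [SF.measure_Iic hSFbot x, sub_zero]
  -- f and G
  set f : ℝ → ℝ := fun t => |deriv u t| with hfdef
  have hf_cont : Continuous f := (hu.continuous_deriv le_rfl).abs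
  have hf_nonneg : ∀ t, 0 ≤ f t := fun t => abs_nonneg _
  have hfK : ∀ t, t ∉ K → f t = 0 := by
    intro t ht
    have : deriv u t = 0 := by
      by_contra hne
      exact ht (support_deriv_subset (by simpa [Function.mem_support] using hne))
    rw [hfdef]; simp [this]
  have hfint : ∀ a c : ℝ, IntervalIntegrable f volume a c :=
    fun a c => hf_cont.intervalIntegrable a c
  set G : ℝ → ℝ := fun x => ∫ s in x..b, f s with hGdef
  have hG_cont : Continuous G := by
    have hG2 : G = fun x => (∫ s in (0:ℝ)..b, f s) - ∫ s in (0:ℝ)..x, f s := by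
      funext x
      rw [eq_sub_iff_add_eq, add_comm]
      exact intervalIntegral.integral_add_adjacent_intervals (hfint 0 x) (hfint x b)
    rw [hG2]
    exact continuous_const.sub (intervalIntegral.continuous_primitive hfint 0)
  have hG_anti : Antitone G := by
    intro x₁ x₂ h12
    have hadd := intervalIntegral.integral_add_adjacent_intervals (hfint x₁ x₂) (hfint x₂ b)
    have hnn : 0 ≤ ∫ s in x₁..x₂, f s :=
      intervalIntegral.integral_nonneg h12 (fun s _ => hf_nonneg s)
    show (∫ s in x₂..b, f s) ≤ ∫ s in x₁..b, f s
    linarith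
  have hGz : ∀ x : ℝ, sK ≤ x → G x = 0 := by
    intro x hx
    rcases le_or_gt x b with hxb | hbx
    · show (∫ s in x..b, f s) = 0
      rw [intervalIntegral.integral_of_le hxb]
      apply setIntegral_eq_zero_of_forall_eq_zero
      intro s hs
      exact hfK s (fun hsK' => absurd (hK_le_sK s hsK') (not_le.2 (lt_of_le_of_lt hx hs.1)))
    · show (∫ s in x..b, f s) = 0
      rw [intervalIntegral.integral_symm, intervalIntegral.integral_of_le hbx.le]
      rw [setIntegral_eq_zero_of_forall_eq_zero, neg_zero]
      intro s hs
      exact hfK s (fun hsK' => absurd (hK_le_sK s hsK') (not_le.2 (lt_trans hsKb hs.1)))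
  have hk₀_le_sK : k₀ ≤ sK := hK_le_sK _ hk0_mem
  set a₀ := k₀ / 2 with ha₀def
  have ha₀pos : 0 < a₀ := by rw [ha₀def]; linarith
  have ha₀b : a₀ < b := by rw [ha₀def]; linarith
  have hfz_low : ∀ s : ℝ, s ≤ a₀ → f s = 0 := by
    intro s hs
    apply hfK
    intro hsK'
    have h1 := hk₀_le_K s hsK'
    rw [ha₀def] at hs
    linarith
  set A := G a₀ with hAdef
  have hG_nonneg : ∀ x : ℝ, 0 ≤ G x := by
    intro x
    rcases le_or_gt x b with hxb | hbx
    · exact intervalIntegral.integral_nonneg hxb (fun s _ => hf_nonneg s)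
    · rw [hGz x (le_trans hsKb.le hbx.le)]
  have hA_nonneg : 0 ≤ A := hG_nonneg a₀
  have hGconst : ∀ x : ℝ, x ≤ a₀ → G x = A := by
    intro x hx
    have hadd := intervalIntegral.integral_add_adjacent_intervals (hfint x a₀) (hfint a₀ b)
    have hz : (∫ s in x..a₀, f s) = 0 := by
      rw [intervalIntegral.integral_of_le hx]
      apply setIntegral_eq_zero_of_forall_eq_zero
      intro s hs
      exact hfz_low s hs.2
    show (∫ s in x..b, f s) = G a₀
    rw [← hadd, hz, zero_add]
  have hGmax : ∀ x : ℝ, G x ≤ A := by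
    intro x
    rcases le_or_gt x a₀ with h | h
    · exact le_of_eq (hGconst x h)
    · exact hG_anti h.le
  have hu_le_G : ∀ t : ℝ, |u t| ≤ G t := by
    intro t
    rcases le_or_gt t b with htb | hbt
    · have hub : u b = 0 := by
        apply image_eq_zero_of_notMem_tsupport
        intro hb'
        exact absurd (hK_le_sK b hb') (not_le.2 hsKb)
      have hder : (∫ s in t..b, deriv u s) = u b - u t :=
        intervalIntegral.integral_deriv_eq_sub
          (fun x _ => (hu.differentiable one_ne_zero).differentiableAt)
          ((hu.continuous_deriv le_rfl).intervalIntegrable t b)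
      have h1 : |u t| = |∫ s in t..b, deriv u s| := by
        rw [hder, hub, zero_sub, abs_neg]
      rw [h1]
      exact intervalIntegral.abs_integral_le_integral_abs htb
    · have h1 : u t = 0 := by
        apply image_eq_zero_of_notMem_tsupport
        intro ht'
        exact absurd (hK_le_sK t ht') (not_le.2 (lt_trans hsKb hbt))
      rw [h1, abs_zero, hGz t (le_trans hsKb.le hbt.le)]
  -- the function m and ψ
  set m : ℝ → ℝ := fun t => sSup {x : ℝ | t ≤ G x} with hmdef
  have hset_closed : ∀ t : ℝ, IsClosed {x : ℝ | t ≤ G x} :=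
    fun t => isClosed_le continuous_const hG_cont
  have hset_ne : ∀ t : ℝ, t ≤ A → ({x : ℝ | t ≤ G x}).Nonempty := by
    intro t ht
    exact ⟨a₀, ht⟩
  have hset_bdd : ∀ t : ℝ, 0 < t → BddAbove {x : ℝ | t ≤ G x} := by
    intro t ht
    refine ⟨sK, fun x hx => ?_⟩
    by_contra hxs
    push_neg at hxs
    have h0 : G x = 0 := hGz x hxs.le
    rw [mem_setOf_eq, h0] at hx
    linarith
  have hm_mem : ∀ t : ℝ, 0 < t → t ≤ A → t ≤ G (m t) := by
    intro t ht hA'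
    exact (hset_closed t).csSup_mem (hset_ne t hA') (hset_bdd t ht)
  have hm_le_sK : ∀ t : ℝ, 0 < t → t ≤ A → m t ≤ sK := by
    intro t ht hA'
    apply csSup_le (hset_ne t hA')
    intro x hx
    by_contra hxs
    push_neg at hxs
    have h0 : G x = 0 := hGz x hxs.le
    rw [mem_setOf_eq, h0] at hx
    linarith
  have hm_anti : ∀ t₁ t₂ : ℝ, 0 < t₁ → t₁ ≤ t₂ → t₂ ≤ A → m t₂ ≤ m t₁ := by
    intro t₁ t₂ h1 h12 h2A
    apply csSup_le_csSup (hset_bdd t₁ h1) (hset_ne t₂ h2A)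
    intro x hx
    exact le_trans h12 hx
  set ψ : ℝ → ℝ :=
    fun t => if 0 < t ∧ t ≤ A then φt (m t) else (if t ≤ 0 then φt b else 0) with hψdef
  have hψ_eq : ∀ t, 0 < t → t ≤ A → ψ t = φt (m t) := fun t h1 h2 => if_pos ⟨h1, h2⟩
  have hψ_nonneg : ∀ t, 0 ≤ ψ t := by
    intro t
    rw [hψdef]
    simp only
    split_ifs
    · exact hφt_nonneg _
    · exact hφt_nonneg _
    · exact le_rfl
  have hφtb_max : ∀ x, φt x ≤ φt b := by
    intro x; rw [hφt_eqb b le_rfl]; exact hφt_le_b x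
  have hψ_anti : Antitone ψ := by
    intro t₁ t₂ h12
    have hv1 := hψ_nonneg t₁
    by_cases h2 : 0 < t₂ ∧ t₂ ≤ A
    · have e2 : ψ t₂ = φt (m t₂) := if_pos h2
      by_cases h1 : 0 < t₁ ∧ t₁ ≤ A
      · have e1 : ψ t₁ = φt (m t₁) := if_pos h1
        rw [e1, e2]
        exact hφt_mono (hm_anti t₁ t₂ h1.1 h12 h2.2)
      · have ht₁0 : t₁ ≤ 0 := by
          by_contra hpos
          push_neg at hpos
          exact h1 ⟨hpos, le_trans h12 h2.2⟩
        have e1 : ψ t₁ = φt b := by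
          rw [hψdef]
          simp only
          rw [if_neg h1, if_pos ht₁0]
        rw [e1, e2]
        exact hφtb_max _
    · have h2' : ψ t₂ = if t₂ ≤ 0 then φt b else 0 := if_neg h2
      by_cases ht₂0 : t₂ ≤ 0
      · have e2 : ψ t₂ = φt b := by rw [h2', if_pos ht₂0]
        have ht₁0 : t₁ ≤ 0 := le_trans h12 ht₂0
        have e1 : ψ t₁ = φt b := by
          rw [hψdef]
          simp only
          rw [if_neg (fun hc : 0 < t₁ ∧ t₁ ≤ A =>
            absurd (lt_of_lt_of_le hc.1 ht₁0) (lt_irrefl _)), if_pos ht₁0]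
        rw [e1, e2]
      · have e2 : ψ t₂ = 0 := by rw [h2', if_neg ht₂0]
        rw [e2]
        exact hv1
  -- derivative agreement
  have hK_lt_b : ∀ t ∈ K, t < b := fun t ht => lt_of_le_of_lt (hK_le_sK t ht) hsKb
  have hderiv_eq : ∀ t : ℝ, t < b → deriv (fun s => φ s ^ q) t = deriv (⇑SF) t := by
    intro t htb
    apply Filter.EventuallyEq.deriv_eq
    filter_upwards [Iio_mem_nhds htb] with y hy
    show φ y ^ q = SF y
    rw [hSFcoe, hφt_eqb y (le_of_lt hy)]
  -- nonnegativity of the two integrals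
  have hpt_nonneg : ∀ t ∈ S, 0 ≤ |u t| ^ q * deriv (fun s => φ s ^ q) t := by
    intro t ht
    by_cases htK : t ∈ K
    · apply mul_nonneg (Real.rpow_nonneg (abs_nonneg _) q)
      rw [hderiv_eq t (hK_lt_b t htK)]
      exact aux_deriv_nonneg hSFmono t
    · rw [image_eq_zero_of_notMem_tsupport htK, abs_zero, Real.zero_rpow hqne, zero_mul]
  have hJ_nonneg : 0 ≤ ∫ t in S, |u t| ^ q * deriv (fun s => φ s ^ q) t :=
    setIntegral_nonneg hSm hpt_nonneg
  have hI_nonneg : 0 ≤ ∫ t in S, |deriv u t| * w t :=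
    setIntegral_nonneg hSm (fun t ht => mul_nonneg (abs_nonneg _) (hwpos t ht.1).le)
  -- integrability facts and E
  have hsupp_fφ : ∀ t, t ∉ K → f t * φt t = 0 := fun t ht => by rw [hfK t ht, zero_mul]
  have hfφt_cont : Continuous (fun t => f t * φt t) := hf_cont.mul hφt_cont
  have hfφt_supp : HasCompactSupport (fun t => f t * φt t) :=
    HasCompactSupport.intro hKcomp hsupp_fφ
  have hfφt_int : Integrable (fun t => f t * φt t) volume :=
    hfφt_cont.integrable_of_hasCompactSupport hfφt_supp
  have hfφ_eq : ∀ t, f t * φt t = f t * φ t := by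
    intro t
    by_cases htK : t ∈ K
    · rw [hφt_eqb t (hK_lt_b t htK).le]
    · rw [hfK t htK, zero_mul, zero_mul]
  have hw_cont : ∀ x : ℝ, 0 < x → ContinuousAt w x := by
    intro x hx
    obtain ⟨L, hL⟩ := hwlip (x/2) (x+1) (by linarith)
    exact (hL.continuousOn).continuousAt (Icc_mem_nhds (by linarith) (by linarith))
  have hfw_cont : Continuous (fun t => f t * w t) := by
    rw [continuous_iff_continuousAt]
    intro x
    rcases lt_or_ge x k₀ with hx | hx
    · have hev : ∀ᶠ y in 𝓝 x, f y * w y = 0 := by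
        filter_upwards [Iio_mem_nhds hx] with y hy
        rw [hfK y (fun hyK => absurd (hk₀_le_K y hyK) (not_le.2 hy)), zero_mul]
      exact ContinuousAt.congr continuousAt_const (hev.mono fun y hy => hy.symm)
    · exact (hf_cont.continuousAt).mul (hw_cont x (lt_of_lt_of_le hk₀pos hx))
  have hfw_supp : HasCompactSupport (fun t => f t * w t) :=
    HasCompactSupport.intro hKcomp (fun t ht => by rw [hfK t ht, zero_mul])
  have hfw_int : Integrable (fun t => f t * w t) volume :=
    hfw_cont.integrable_of_hasCompactSupport hfw_supp
  set E := ∫ t in S, f t * φ t with hEdef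
  have hE_le_I : E ≤ ∫ t in S, |deriv u t| * w t := by
    rw [hEdef]
    apply setIntegral_mono_on
    · have h2 : (fun t => f t * φ t) = (fun t => f t * φt t) :=
        funext fun t => (hfφ_eq t).symm
      rw [h2]
      exact hfφt_int.integrableOn
    · exact hfw_int.integrableOn
    · exact hSm
    · intro t ht
      exact mul_le_mul_of_nonneg_left (hφ_le_w t ht.1 ht.2.le) (hf_nonneg t)
  have hE_nonneg : 0 ≤ E :=
    setIntegral_nonneg hSm (fun t ht => mul_nonneg (hf_nonneg t) (hφ_nonneg t))
  -- convert J to a lintegral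
  set μ := SF.measure with hμdef
  have hmeas_integrand : AEStronglyMeasurable
      (fun t => |u t| ^ q * deriv (fun s => φ s ^ q) t) (volume.restrict S) := by
    apply Measurable.aestronglyMeasurable
    exact (((hu.continuous.abs).rpow_const (fun x => Or.inr hq0.le)).measurable).mul
      (measurable_deriv _)
  have hJ_eq : (∫ t in S, |u t| ^ q * deriv (fun s => φ s ^ q) t)
      = (∫⁻ t in S, ENNReal.ofReal (|u t| ^ q * deriv (fun s => φ s ^ q) t)).toReal := by
    apply integral_eq_lintegral_of_nonneg_ae
    · filter_upwards [ae_restrict_mem hSm] with t ht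
      exact hpt_nonneg t ht
    · exact hmeas_integrand
  have hGq_meas : Measurable (fun t => ENNReal.ofReal (G t ^ q)) :=
    (ENNReal.continuous_ofReal.comp ((aux_rpow_cont hq0.le).comp hG_cont)).measurable
  have hstep1 : (∫⁻ t in S, ENNReal.ofReal (|u t| ^ q * deriv (fun s => φ s ^ q) t))
      ≤ ∫⁻ t in S, ENNReal.ofReal (G t ^ q) * ENNReal.ofReal (deriv (⇑SF) t) := by
    apply lintegral_mono_ae
    filter_upwards [ae_restrict_mem hSm] with t ht
    by_cases htK : t ∈ K
    · rw [hderiv_eq t (hK_lt_b t htK)]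
      rcases le_or_gt 0 (deriv (⇑SF) t) with hd | hd
      · rw [ENNReal.ofReal_mul (Real.rpow_nonneg (abs_nonneg _) q)]
        exact mul_le_mul_left (ENNReal.ofReal_le_ofReal
          (Real.rpow_le_rpow (abs_nonneg _) (hu_le_G t) hq0.le)) _
      · have hnp : |u t| ^ q * deriv (⇑SF) t ≤ 0 :=
          mul_nonpos_of_nonneg_of_nonpos (Real.rpow_nonneg (abs_nonneg _) q) hd.le
        rw [ENNReal.ofReal_eq_zero.2 hnp]
        exact zero_le
    · rw [image_eq_zero_of_notMem_tsupport htK, abs_zero, Real.zero_rpow hqne, zero_mul,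
        ENNReal.ofReal_zero]
      exact zero_le
  have hstep2 : (∫⁻ t in S, ENNReal.ofReal (G t ^ q) * ENNReal.ofReal (deriv (⇑SF) t))
      ≤ ∫⁻ t in S, ENNReal.ofReal (G t ^ q) ∂μ := aux_stieltjes SF hGq_meas hSm
  have hstep3 : (∫⁻ t in S, ENNReal.ofReal (G t ^ q) ∂μ)
      ≤ ∫⁻ t, ENNReal.ofReal (G t ^ q) ∂μ := setLIntegral_le_lintegral _ _
  -- layer cake
  have hint_q : ∀ x : ℝ, 0 ≤ x → (∫ t in (0:ℝ)..x, q * t ^ (q-1)) = x ^ q := by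
    intro x hx
    rw [intervalIntegral.integral_const_mul, integral_rpow (Or.inl (by linarith)),
      sub_add_cancel, Real.zero_rpow hqne, sub_zero]
    field_simp
  have hg_intble : ∀ t : ℝ, t > 0 → IntervalIntegrable (fun s => q * s ^ (q-1)) volume 0 t :=
    fun t _ => (continuous_const.mul (aux_rpow_cont (by linarith))).intervalIntegrable 0 t
  have hgnn : ∀ᵐ t ∂(volume.restrict (Ioi (0:ℝ))), 0 ≤ q * t ^ (q-1) := by
    filter_upwards [ae_restrict_mem measurableSet_Ioi] with t ht
    exact mul_nonneg hq0.le (Real.rpow_nonneg (le_of_lt ht) _)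
  have hlayer : (∫⁻ t, ENNReal.ofReal (G t ^ q) ∂μ)
      = ∫⁻ t in Ioi (0:ℝ), μ {a : ℝ | t ≤ G a} * ENNReal.ofReal (q * t ^ (q-1)) := by
    have h1 : (∫⁻ t, ENNReal.ofReal (G t ^ q) ∂μ)
        = ∫⁻ t, ENNReal.ofReal (∫ s in (0:ℝ)..(G t), q * s ^ (q-1)) ∂μ := by
      apply lintegral_congr
      intro t
      rw [hint_q (G t) (hG_nonneg t)]
    rw [h1, lintegral_comp_eq_lintegral_meas_le_mul μ (ae_of_all _ hG_nonneg)
      (hG_cont.measurable.aemeasurable) hg_intble hgnn]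
  have hsplit : (∫⁻ t in Ioi (0:ℝ), μ {a : ℝ | t ≤ G a} * ENNReal.ofReal (q * t ^ (q-1)))
      = (∫⁻ t in Ioc (0:ℝ) A, μ {a : ℝ | t ≤ G a} * ENNReal.ofReal (q * t ^ (q-1)))
        + ∫⁻ t in Ioi A, μ {a : ℝ | t ≤ G a} * ENNReal.ofReal (q * t ^ (q-1)) := by
    rw [← lintegral_union measurableSet_Ioi (Set.Ioc_disjoint_Ioi le_rfl),
      Set.Ioc_union_Ioi_eq_Ioi hA_nonneg]
  have htail : (∫⁻ t in Ioi A, μ {a : ℝ | t ≤ G a} * ENNReal.ofReal (q * t ^ (q-1))) = 0 := by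
    rw [setLIntegral_congr_fun measurableSet_Ioi
      (fun t (ht : t ∈ Ioi A) => ?_), lintegral_zero]
    have hempty : {a : ℝ | t ≤ G a} = ∅ := by
      ext a
      simp only [mem_setOf_eq, mem_empty_iff_false, iff_false, not_le]
      exact lt_of_le_of_lt (hGmax a) ht
    rw [hempty]
    simp
  have hSF_deriv_fact : ∀ t : ℝ, 0 < t → t ≤ A → μ {a : ℝ | t ≤ G a} ≤ ENNReal.ofReal (ψ t ^ q) := by
    intro t ht htA
    have hsub : {a : ℝ | t ≤ G a} ⊆ Iic (m t) := by
      intro x hx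
      exact le_csSup (hset_bdd t ht) hx
    calc μ {a : ℝ | t ≤ G a} ≤ μ (Iic (m t)) := measure_mono hsub
      _ = ENNReal.ofReal (φt (m t) ^ q) := hSF_Iic (m t)
      _ = ENNReal.ofReal (ψ t ^ q) := by rw [hψ_eq t ht htA]
  have hbound : (∫⁻ t in Ioc (0:ℝ) A, μ {a : ℝ | t ≤ G a} * ENNReal.ofReal (q * t ^ (q-1)))
      ≤ ∫⁻ t in Ioc (0:ℝ) A, ENNReal.ofReal (q * t ^ (q-1)) * ENNReal.ofReal (ψ t ^ q) := by
    apply lintegral_mono_ae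
    filter_upwards [ae_restrict_mem measurableSet_Ioc] with t ht
    rw [mul_comm]
    exact mul_le_mul_right (hSF_deriv_fact t ht.1 ht.2) _
  have hΨAbd := aux_hardy hq hψ_anti hψ_nonneg hA_nonneg
  set ΨA := ∫ s in (0:ℝ)..A, ψ s with hΨAdef
  have hΨA_nonneg : 0 ≤ ΨA :=
    intervalIntegral.integral_nonneg hA_nonneg (fun s _ => hψ_nonneg s)
  have hchain : (∫⁻ t in S, ENNReal.ofReal (|u t| ^ q * deriv (fun s => φ s ^ q) t))
      ≤ ENNReal.ofReal (ΨA ^ q) := by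
    refine le_trans hstep1 (le_trans hstep2 (le_trans hstep3 ?_))
    rw [hlayer, hsplit, htail, add_zero]
    exact le_trans hbound hΨAbd
  have hJ_le : (∫ t in S, |u t| ^ q * deriv (fun s => φ s ^ q) t) ≤ ΨA ^ q := by
    rw [hJ_eq]
    calc (∫⁻ t in S, ENNReal.ofReal (|u t| ^ q * deriv (fun s => φ s ^ q) t)).toReal
        ≤ (ENNReal.ofReal (ΨA ^ q)).toReal :=
          ENNReal.toReal_mono ENNReal.ofReal_ne_top hchain
      _ = ΨA ^ q := ENNReal.toReal_ofReal (Real.rpow_nonneg hΨA_nonneg q)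
  -- ΨA ≤ E via the layering lemma
  set ρ : ℝ → ℝ≥0∞ :=
    fun l => ∫⁻ s, ENNReal.ofReal (f s) * (if l < φt s then (1:ℝ≥0∞) else 0) with hρdef
  have hkey : ∀ t ∈ Ioc (0:ℝ) A, ∀ l, 0 < l → l < ψ t → ENNReal.ofReal t ≤ ρ l := by
    intro t ht l hl hlψ
    rw [hψ_eq t ht.1 ht.2] at hlψ
    have h1 : t ≤ G (m t) := hm_mem t ht.1 ht.2
    have hmb : m t ≤ b := le_trans (hm_le_sK t ht.1 ht.2) hsKb.le
    have h2 : ENNReal.ofReal t ≤ ENNReal.ofReal (G (m t)) := ENNReal.ofReal_le_ofReal h1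
    have h3 : ENNReal.ofReal (G (m t)) = ∫⁻ s in Ioc (m t) b, ENNReal.ofReal (f s) := by
      show ENNReal.ofReal (∫ s in (m t)..b, f s) = _
      rw [intervalIntegral.integral_of_le hmb]
      exact ofReal_integral_eq_lintegral_ofReal
        ((intervalIntegrable_iff_integrableOn_Ioc_of_le hmb).1 (hfint (m t) b))
        (ae_of_all _ fun s => hf_nonneg s)
    have h4 : (∫⁻ s in Ioc (m t) b, ENNReal.ofReal (f s))
        ≤ ∫⁻ s in Ioc (m t) b, ENNReal.ofReal (f s) * (if l < φt s then (1:ℝ≥0∞) else 0) := by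
      apply lintegral_mono_ae
      filter_upwards [ae_restrict_mem measurableSet_Ioc] with s hs
      by_cases hsK' : s ∈ K
      · rw [if_pos (lt_of_lt_of_le hlψ (hφt_mono (le_of_lt hs.1))), mul_one]
      · rw [hfK s hsK', ENNReal.ofReal_zero, zero_mul]
    have h5 : (∫⁻ s in Ioc (m t) b, ENNReal.ofReal (f s) * (if l < φt s then (1:ℝ≥0∞) else 0))
        ≤ ρ l := setLIntegral_le_lintegral _ _
    exact le_trans h2 (le_trans (le_of_eq h3) (le_trans h4 h5))
  have hlayer2 : ENNReal.ofReal ΨA ≤ ∫⁻ l in Ioi (0:ℝ), ρ l :=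
    aux_layer hψ_anti hψ_nonneg hA_nonneg hkey
  have hρ_eq : (∫⁻ l in Ioi (0:ℝ), ρ l) = ENNReal.ofReal E := by
    have hswap : (∫⁻ l in Ioi (0:ℝ), ρ l)
        = ∫⁻ s, ∫⁻ l in Ioi (0:ℝ),
            ENNReal.ofReal (f s) * (if l < φt s then (1:ℝ≥0∞) else 0) := by
      apply lintegral_lintegral_swap
      apply Measurable.aemeasurable
      have hset : MeasurableSet {p : ℝ × ℝ | p.1 < φt p.2} :=
        measurableSet_lt measurable_fst ((hφt_cont.measurable).comp measurable_snd)
      exact ((ENNReal.continuous_ofReal.measurable.comp hf_cont.measurable).comp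
        measurable_snd).mul (Measurable.ite hset measurable_const measurable_const)
    rw [hρdef] at hswap ⊢
    rw [hswap]
    have hinner : ∀ s : ℝ,
        (∫⁻ l in Ioi (0:ℝ), ENNReal.ofReal (f s) * (if l < φt s then (1:ℝ≥0∞) else 0))
        = ENNReal.ofReal (f s * φt s) := by
      intro s
      rw [lintegral_const_mul _ (Measurable.ite (measurableSet_Iio (a := φt s))
        measurable_const measurable_const)]
      rw [← aux_ofReal_eq (φt s) (hφt_nonneg s), ← ENNReal.ofReal_mul (hf_nonneg s)]
    calc (∫⁻ s, ∫⁻ l in Ioi (0:ℝ),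
            ENNReal.ofReal (f s) * (if l < φt s then (1:ℝ≥0∞) else 0))
        = ∫⁻ s, ENNReal.ofReal (f s * φt s) := lintegral_congr hinner
      _ = ENNReal.ofReal (∫ s, f s * φt s) :=
          (ofReal_integral_eq_lintegral_ofReal hfφt_int
            (ae_of_all _ fun s => mul_nonneg (hf_nonneg s) (hφt_nonneg s))).symm
      _ = ENNReal.ofReal E := by
          congr 1
          have h6 : (∫ s, f s * φt s) = ∫ s in S, f s * φt s :=
            (setIntegral_eq_integral_of_forall_compl_eq_zero
              (fun x hx => hsupp_fφ x (fun hxK => hx (hKS hxK)))).symm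
          rw [h6, hEdef]
          simp only [hfφ_eq]
  have hΨA_le_E : ΨA ≤ E :=
    (ENNReal.ofReal_le_ofReal_iff hE_nonneg).1 (le_trans hlayer2 (le_of_eq hρ_eq))
  -- conclusion
  have hJ_le_Iq : (∫ t in S, |u t| ^ q * deriv (fun s => φ s ^ q) t)
      ≤ (∫ t in S, |deriv u t| * w t) ^ q :=
    le_trans hJ_le (Real.rpow_le_rpow hΨA_nonneg (le_trans hΨA_le_E hE_le_I) hq0.le)
  rw [ge_iff_le]
  calc (∫ t in S, |u t| ^ q * deriv (fun s => φ s ^ q) t) ^ (1/q)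
      ≤ ((∫ t in S, |deriv u t| * w t) ^ q) ^ (1/q) :=
        Real.rpow_le_rpow hJ_nonneg hJ_le_Iq (by positivity)
    _ = ∫ t in S, |deriv u t| * w t := by
        rw [← Real.rpow_mul hI_nonneg, mul_one_div_cancel hqne, Real.rpow_one]
end

section
/- Let 0 < η ≤ ∞, 1 ≤ q < ∞, and let w : (0,∞) → (0,∞) be locally Lipschitz with lim_{t→0+} w(t) = ∞. Define ψ_w(t) = inf_{0 ≤ s ≤ t} w(s) for 0 < t ≤ η (and ψ_w(t) = inf_{0 ≤ s ≤ η} w(s) for t ≥ η). Then for every compactly supported C¹ function u on (0,η), one has ∫₀^η |u'(t)| w(t) dt ≥ ( ∫₀^η |u(t)|^q (−d/dt)(ψ_w(t)^q) dt )^{1/q}. -/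
open MeasureTheory Set Filter Topology
open scoped ENNReal

theorem stmt1 (η : ℝ≥0∞) (hη : 0 < η) (q : ℝ) (hq : 1 ≤ q)
    (w : ℝ → ℝ) (hwpos : ∀ t : ℝ, 0 < t → 0 < w t)
    (hwlip : ∀ a b : ℝ, 0 < a → ∃ K : NNReal, LipschitzOnWith K w (Set.Icc a b))
    (hw0 : Tendsto w (nhdsWithin 0 (Set.Ioi 0)) atTop)
    (ψ : ℝ → ℝ)
    (hψ : ∀ t : ℝ, ψ t = sInf (w '' Set.Ioc 0 t))
    (u : ℝ → ℝ) (hu : ContDiff ℝ 1 u) (husupp : HasCompactSupport u)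
    (husub : tsupport u ⊆ {t : ℝ | 0 < t ∧ ENNReal.ofReal t < η}) :
    ∫ t in {t : ℝ | 0 < t ∧ ENNReal.ofReal t < η}, |deriv u t| * w t ≥
      (∫ t in {t : ℝ | 0 < t ∧ ENNReal.ofReal t < η},
        |u t| ^ q * (-(deriv (fun s => ψ s ^ q) t))) ^ (1 / q) := by
  have hq0 : (0:ℝ) < q := lt_of_lt_of_le one_pos hq
  have hq0' : q ≠ 0 := hq0.ne'
  have hiq : (0:ℝ) < 1/q := by positivity
  set S : Set ℝ := {t : ℝ | 0 < t ∧ ENNReal.ofReal t < η} with hSdef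
  have hSopen : IsOpen S := by
    have : S = Set.Ioi 0 ∩ (ENNReal.ofReal ⁻¹' Set.Iio η) := by
      ext t; simp [hSdef, Set.mem_Ioi]
    rw [this]
    exact isOpen_Ioi.inter (ENNReal.continuous_ofReal.isOpen_preimage _ isOpen_Iio)
  have hSmeas : MeasurableSet S := hSopen.measurableSet
  have hS_pos : ∀ t ∈ S, (0:ℝ) < t := fun t ht => ht.1
  -- trivial case : u ≡ 0
  by_cases hKe : tsupport u = ∅
  · have hu0 : ∀ t, u t = 0 := fun t =>
      image_eq_zero_of_notMem_tsupport (by simp [hKe])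
    have hu0' : u = fun _ => (0:ℝ) := funext hu0
    have hd0 : ∀ t, deriv u t = 0 := by intro t; rw [hu0']; simp
    rw [ge_iff_le]
    simp only [hd0, hu0, abs_zero, zero_mul, Real.zero_rpow hq0', integral_zero,
      Real.zero_rpow hiq.ne']
    exact le_rfl
  have hKne : (tsupport u).Nonempty := nonempty_iff_ne_empty.2 hKe
  set K : Set ℝ := tsupport u with hKdef
  have hKcomp : IsCompact K := husupp
  have hKS : K ⊆ S := husub
  set a : ℝ := sInf K with hadef
  have haK : a ∈ K := hKcomp.sInf_mem hKne
  have ha0 : 0 < a := (hKS haK).1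
  have haleK : ∀ x ∈ K, a ≤ x := fun x hx => csInf_le hKcomp.bddBelow hx
  set ε : ℝ := a/2 with hεdef
  have hε0 : 0 < ε := by positivity
  have hεa : ε < a := by linarith
  -- continuity of w on positive reals
  have hwcont : ∀ t : ℝ, 0 < t → ContinuousAt w t := by
    intro t ht
    obtain ⟨L, hL⟩ := hwlip (t/2) (t+1) (by positivity)
    exact hL.continuousOn.continuousAt (Icc_mem_nhds (by linarith) (by linarith))
  -- basic facts about ψ
  have hψ_bdd : ∀ t : ℝ, BddBelow (w '' Set.Ioc 0 t) := by
    intro t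
    refine ⟨0, fun y hy => ?_⟩
    obtain ⟨σ, hσ, rfl⟩ := hy
    exact (hwpos σ hσ.1).le
  have hψ_nonneg : ∀ t : ℝ, 0 ≤ ψ t := by
    intro t
    rw [hψ]
    rcases le_or_gt t 0 with ht | ht
    · rw [Set.Ioc_eq_empty (by intro hc; linarith [hc.trans_le ht] : ¬ (0:ℝ) < t), Set.image_empty,
        Real.sInf_empty]
    · exact le_csInf ((Set.nonempty_Ioc.2 ht).image _)
        (fun y hy => by obtain ⟨σ, hσ, rfl⟩ := hy; exact (hwpos σ hσ.1).le)
  have hψ_le_w : ∀ t : ℝ, 0 < t → ψ t ≤ w t := by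
    intro t ht
    rw [hψ]
    exact csInf_le (hψ_bdd t) ⟨t, ⟨ht, le_rfl⟩, rfl⟩
  have hψ_anti : ∀ s t : ℝ, 0 < s → s ≤ t → ψ t ≤ ψ s := by
    intro s t hs hst
    rw [hψ s, hψ t]
    exact csInf_le_csInf (hψ_bdd t) ((Set.nonempty_Ioc.2 hs).image _)
      (Set.image_mono (Set.Ioc_subset_Ioc_right hst))
  have hψ_cont : ∀ t : ℝ, 0 < t → ContinuousAt ψ t := by
    intro t ht
    obtain ⟨L, hL⟩ := hwlip (t/2) (t+1) (by positivity)
    have key : ∀ s₁ ∈ Set.Icc (t/2) (t+1), ∀ s₂ ∈ Set.Icc (t/2) (t+1), s₁ ≤ s₂ →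
        ψ s₁ - ψ s₂ ≤ L * (s₂ - s₁) := by
      intro s₁ hs₁ s₂ hs₂ h12
      have hs₁0 : 0 < s₁ := lt_of_lt_of_le (by linarith) hs₁.1
      have hmin : min (ψ s₁) (w s₁ - L * (s₂ - s₁)) ≤ ψ s₂ := by
        rw [hψ s₂]
        refine le_csInf ((Set.nonempty_Ioc.2 (lt_of_lt_of_le hs₁0 h12)).image _) ?_
        rintro y ⟨σ, hσ, rfl⟩
        rcases le_or_gt σ s₁ with hc | hc
        · refine (min_le_left _ _).trans ?_
          rw [hψ s₁]
          exact csInf_le (hψ_bdd s₁) ⟨σ, ⟨hσ.1, hc⟩, rfl⟩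
        · refine (min_le_right _ _).trans ?_
          have hσIcc : σ ∈ Set.Icc (t/2) (t+1) := ⟨le_trans hs₁.1 hc.le, le_trans hσ.2 hs₂.2⟩
          have hd := hL.dist_le_mul s₁ hs₁ σ hσIcc
          rw [Real.dist_eq, Real.dist_eq] at hd
          have h1 : w s₁ - w σ ≤ |w s₁ - w σ| := le_abs_self _
          have h2 : |s₁ - σ| = σ - s₁ := by rw [abs_sub_comm]; exact abs_of_nonneg (by linarith)
          nlinarith [hd, h1, h2, L.coe_nonneg, hσ.2]
      have hψw : ψ s₁ ≤ w s₁ := hψ_le_w s₁ hs₁0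
      rcases min_cases (ψ s₁) (w s₁ - L * (s₂ - s₁)) with ⟨hmeq, _⟩ | ⟨hmeq, _⟩ <;>
        rw [hmeq] at hmin
      · nlinarith [L.coe_nonneg]
      · linarith
    have hlip : LipschitzOnWith L ψ (Set.Icc (t/2) (t+1)) := by
      apply LipschitzOnWith.of_dist_le_mul
      intro x hx y hy
      rcases le_total x y with hxy | hxy
      · have h1 := key x hx y hy hxy
        have h2 : ψ y ≤ ψ x := hψ_anti x y (lt_of_lt_of_le (by linarith) hx.1) hxy
        rw [Real.dist_eq, Real.dist_eq, abs_of_nonneg (by linarith), abs_of_nonpos (by linarith)]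
        linarith
      · have h1 := key y hy x hx hxy
        have h2 : ψ x ≤ ψ y := hψ_anti y x (lt_of_lt_of_le (by linarith) hy.1) hxy
        rw [Real.dist_eq, Real.dist_eq, abs_of_nonpos (by linarith : ψ x - ψ y ≤ 0),
          abs_of_nonneg (by linarith : (0:ℝ) ≤ x - y)]
        linarith
    exact hlip.continuousOn.continuousAt (Icc_mem_nhds (by linarith) (by linarith))
  -- the Stieltjes function g
  set g : ℝ → ℝ := fun t => -(ψ (max t ε)) ^ q with hgdef
  have hg_mono : Monotone g := by
    intro s t hst
    simp only [hgdef, neg_le_neg_iff]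
    exact Real.rpow_le_rpow (hψ_nonneg _)
      (hψ_anti _ _ (lt_of_lt_of_le hε0 (le_max_right s ε)) (max_le_max hst le_rfl)) hq0.le
  have hg_cont : Continuous g := by
    rw [continuous_iff_continuousAt]
    intro t
    have hmax : ContinuousAt (fun x : ℝ => max x ε) t :=
      (continuous_id.max continuous_const).continuousAt
    have h1 : ContinuousAt (fun x => ψ (max x ε)) t :=
      ContinuousAt.comp (hψ_cont (max t ε) (lt_of_lt_of_le hε0 (le_max_right t ε))) hmax
    have h2 : ContinuousAt (fun x : ℝ => x ^ q) (ψ (max t ε)) :=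
      Real.continuousAt_rpow_const _ _ (Or.inr hq0.le)
    exact (ContinuousAt.comp (x := t) (g := fun x : ℝ => x ^ q)
      (f := fun x => ψ (max x ε)) h2 h1).neg
  have hg_nonpos : ∀ t, g t ≤ 0 := by
    intro t
    simp only [hgdef, neg_nonpos]
    exact Real.rpow_nonneg (hψ_nonneg _) q
  set G : StieltjesFunction ℝ := ⟨g, hg_mono, fun x => (hg_cont.continuousAt).continuousWithinAt⟩
    with hGdef
  set ν : Measure ℝ := G.measure with hνdef
  have hg_bot : Tendsto g atBot (𝓝 (g ε)) := by
    have heq : ∀ t ≤ ε, g t = g ε := by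
      intro t ht; simp only [hgdef]; rw [max_eq_right ht, max_self]
    exact Tendsto.congr'
      (by filter_upwards [eventually_le_atBot ε] with t ht; exact (heq t ht).symm)
      tendsto_const_nhds
  obtain ⟨l, hg_top⟩ : ∃ l : ℝ, Tendsto g atTop (𝓝 l) :=
    ⟨⨆ t, g t, tendsto_atTop_ciSup hg_mono ⟨0, by rintro y ⟨t, rfl⟩; exact hg_nonpos t⟩⟩
  have hl0 : l ≤ 0 := le_of_tendsto hg_top (Filter.Eventually.of_forall hg_nonpos)
  have hνfin : IsFiniteMeasure ν := G.isFiniteMeasure hg_bot hg_top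
  have hν_Ici : ∀ s : ℝ, a ≤ s → ν (Set.Ici s) ≤ ENNReal.ofReal (ψ s ^ q) := by
    intro s hs
    have hεs : ε ≤ s := le_trans hεa.le hs
    have hll : Function.leftLim g s = g s :=
      leftLim_eq_of_tendsto
        ((hg_cont.tendsto s).mono_left nhdsWithin_le_nhds)
    have hm : ν (Set.Ici s) = ENNReal.ofReal (l - Function.leftLim g s) := G.measure_Ici hg_top s
    rw [hm, hll]
    apply ENNReal.ofReal_le_ofReal
    have : g s = -(ψ s) ^ q := by simp only [hgdef]; rw [max_eq_left hεs]
    rw [this]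
    linarith
  -- a.e. derivative identification
  have hDae : ∀ᵐ t : ℝ, |u t| ^ q * (-(deriv (fun s => ψ s ^ q) t)) =
      |u t| ^ q * (Measure.rnDeriv ν volume t).toReal := by
    filter_upwards [G.ae_hasDerivAt] with t hd
    rcases le_or_gt t ε with ht | ht
    · have hut : u t = 0 := image_eq_zero_of_notMem_tsupport
        (fun hc => absurd (haleK t hc) (by linarith))
      rw [hut, abs_zero, Real.zero_rpow hq0', zero_mul, zero_mul]
    · have hdg : HasDerivAt g ((Measure.rnDeriv ν volume t).toReal) t := hd
      have hev : (fun s => ψ s ^ q) =ᶠ[𝓝 t] fun s => -g s := by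
        filter_upwards [Ioi_mem_nhds ht] with s hs
        simp only [hgdef, neg_neg]
        rw [max_eq_left hs.le]
      have hd' : HasDerivAt (fun s => ψ s ^ q) (-(Measure.rnDeriv ν volume t).toReal) t :=
        (hdg.neg).congr_of_eventuallyEq hev
      rw [hd'.deriv, neg_neg]
  -- the main lintegral objects
  set h : ℝ → ℝ≥0∞ := fun s => ENNReal.ofReal |deriv u s| with hhdef
  have hu'cont : Continuous (deriv u) := hu.continuous_deriv le_rfl
  have hmeas_h : Measurable h := (hu'cont.abs.measurable).ennreal_ofReal
  have hu'int : Integrable (fun s => |deriv u s|) volume :=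
    (hu'cont.abs).integrable_of_hasCompactSupport husupp.deriv.abs
  have hh_zero : ∀ s, s ∉ K → h s = 0 := by
    intro s hs
    have : deriv u s = 0 :=
      by
      by_contra hne
      exact hs (support_deriv_subset (by simpa [Function.mem_support] using hne))
    simp [hhdef, this]
  set Gf : ℝ → ℝ≥0∞ := fun t => ∫⁻ s in Set.Iic t, h s ∂volume with hGfdef
  have hGf_mono : Monotone Gf := fun s t hst =>
    lintegral_mono_set (Set.Iic_subset_Iic.2 hst)
  have hGf_meas : Measurable Gf := hGf_mono.measurable
  set P : ℝ≥0∞ := ∫⁻ t, (Gf t) ^ q ∂ν with hPdef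
  set R0 : ℝ≥0∞ := ∫⁻ t, ENNReal.ofReal (|u t| ^ q) ∂ν with hR0def
  set L1 : ℝ≥0∞ := ∫⁻ s, h s * ENNReal.ofReal (ψ s) ∂volume with hL1def
  -- pointwise bound |u t| ≤ ∫_{≤ t} |u'|
  have hu_le : ∀ t : ℝ, ENNReal.ofReal (|u t| ^ q) ≤ (Gf t) ^ q := by
    intro t
    set r : ℝ := min t ε with hrdef
    have hrt : r ≤ t := min_le_left _ _
    have hur : u r = 0 := image_eq_zero_of_notMem_tsupport
      (fun hc => absurd (haleK r hc) (not_le.2 (lt_of_le_of_lt (min_le_right t ε) hεa)))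
    have hftc : ∫ x in r..t, deriv u x = u t - u r :=
      intervalIntegral.integral_deriv_eq_sub
        (fun x _ => (hu.differentiable one_ne_zero).differentiableAt) (hu'cont.intervalIntegrable r t)
    have h1 : |u t| ≤ ∫ x in r..t, |deriv u x| := by
      calc |u t| = |∫ x in r..t, deriv u x| := by rw [hftc, hur, sub_zero]
        _ ≤ ∫ x in r..t, |deriv u x| := intervalIntegral.abs_integral_le_integral_abs hrt
    have h2 : (∫ x in r..t, |deriv u x|) ≤ ∫ x in Set.Iic t, |deriv u x| := by
      rw [intervalIntegral.integral_of_le hrt]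
      exact setIntegral_mono_set hu'int.integrableOn
        (Filter.Eventually.of_forall fun x => abs_nonneg _)
        (HasSubset.Subset.eventuallyLE Set.Ioc_subset_Iic_self)
    have h3 : ENNReal.ofReal (∫ x in Set.Iic t, |deriv u x|) = Gf t :=
      ofReal_integral_eq_lintegral_ofReal hu'int.integrableOn
        (Filter.Eventually.of_forall fun x => abs_nonneg _)
    calc ENNReal.ofReal (|u t| ^ q)
        ≤ ENNReal.ofReal ((∫ x in Set.Iic t, |deriv u x|) ^ q) :=
          ENNReal.ofReal_le_ofReal (Real.rpow_le_rpow (abs_nonneg _) (h1.trans h2) hq0.le)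
      _ = (ENNReal.ofReal (∫ x in Set.Iic t, |deriv u x|)) ^ q :=
          (ENNReal.ofReal_rpow_of_nonneg (integral_nonneg fun x => abs_nonneg _) hq0.le).symm
      _ = (Gf t) ^ q := by rw [h3]
  have hR0P : R0 ≤ P := lintegral_mono hu_le
  have hPfin : P ≠ ⊤ := by
    have hC : (∫⁻ s, h s ∂volume) = ENNReal.ofReal (∫ s, |deriv u s|) :=
      (ofReal_integral_eq_lintegral_ofReal hu'int
        (Filter.Eventually.of_forall fun x => abs_nonneg _)).symm
    have hCfin : (∫⁻ s, h s ∂volume) ≠ ⊤ := by rw [hC]; exact ENNReal.ofReal_ne_top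
    have hGle : ∀ t, Gf t ≤ ∫⁻ s, h s ∂volume := fun t => setLIntegral_le_lintegral _ _
    refine ne_top_of_le_ne_top
      (ENNReal.mul_ne_top (ENNReal.rpow_ne_top_of_nonneg hq0.le hCfin) (measure_ne_top ν _))
      (le_trans (lintegral_mono fun t => ENNReal.rpow_le_rpow (hGle t) hq0.le)
        (le_of_eq (lintegral_const _)))
  -- the key Minkowski/Hölder chain
  have hexp : (0:ℝ) ≤ 1 - 1/q := by
    rw [sub_nonneg, div_le_one hq0]; exact hq
  have hMain : P ≤ P ^ (1 - 1/q) * L1 := by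
    have hsplit : ∀ x : ℝ≥0∞, x ^ q = x * x ^ (q - 1) := by
      intro x
      rcases eq_or_ne x 0 with rfl | hx0
      · rw [ENNReal.zero_rpow_of_pos hq0, zero_mul]
      rcases eq_or_ne x ⊤ with rfl | hxt
      · rcases eq_or_lt_of_le hq with rfl | hq1
        · rw [ENNReal.rpow_one, sub_self, ENNReal.rpow_zero, mul_one]
        · rw [ENNReal.top_rpow_of_pos hq0, ENNReal.top_rpow_of_pos (by linarith),
            ENNReal.top_mul_top]
      · conv_lhs => rw [show q = 1 + (q-1) by ring]
        rw [ENNReal.rpow_add _ _ hx0 hxt, ENNReal.rpow_one]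
    have hHolder : ∀ s ∈ K, (∫⁻ t in Set.Ici s, (Gf t) ^ (q-1) ∂ν)
        ≤ P ^ (1 - 1/q) * ENNReal.ofReal (ψ s) := by
      intro s hs
      have hψs : (ν (Set.Ici s)) ^ (1/q) ≤ ENNReal.ofReal (ψ s) := by
        calc (ν (Set.Ici s)) ^ (1/q)
            ≤ (ENNReal.ofReal (ψ s ^ q)) ^ (1/q) :=
              ENNReal.rpow_le_rpow (hν_Ici s (haleK s hs)) hiq.le
          _ = (ENNReal.ofReal (ψ s)) ^ (q * (1/q)) := by
              rw [← ENNReal.ofReal_rpow_of_nonneg (hψ_nonneg s) hq0.le, ← ENNReal.rpow_mul]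
          _ = ENNReal.ofReal (ψ s) := by rw [mul_one_div_cancel hq0', ENNReal.rpow_one]
      rcases eq_or_lt_of_le hq with rfl | hq1
      · simp only [sub_self, ENNReal.rpow_zero]
        rw [setLIntegral_one, show (1:ℝ) - 1/1 = 0 by norm_num, ENNReal.rpow_zero, one_mul]
        calc ν (Set.Ici s) = (ν (Set.Ici s)) ^ ((1:ℝ)/1) := by rw [div_one, ENNReal.rpow_one]
          _ ≤ ENNReal.ofReal (ψ s) := hψs
      · have hpq : (q / (q - 1)).HolderConjugate q :=
          (Real.HolderConjugate.conjExponent hq1).symm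
        have hH := ENNReal.lintegral_mul_le_Lp_mul_Lq (ν.restrict (Set.Ici s)) hpq
          ((hGf_meas.pow_const (q-1)).aemeasurable) (aemeasurable_const (b := (1:ℝ≥0∞)))
        simp only [Pi.mul_apply, mul_one, ENNReal.one_rpow] at hH
        rw [setLIntegral_one] at hH
        have hrw : ∀ x : ℝ≥0∞, (x ^ (q-1)) ^ (q/(q-1)) = x ^ q := by
          intro x
          rw [← ENNReal.rpow_mul]
          congr 1
          have hq1' : q - 1 ≠ 0 := by linarith
          field_simp
        simp only [hrw] at hH
        refine hH.trans (mul_le_mul' ?_ hψs)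
        have h1 : (1:ℝ) / (q/(q-1)) = 1 - 1/q := by
          field_simp
        rw [h1]
        exact ENNReal.rpow_le_rpow (setLIntegral_le_lintegral _ _) hexp
    have hind : ∀ t s : ℝ, (Set.Iic t).indicator h s * (Gf t)^(q-1)
        = (Set.Ici s).indicator (fun t' => h s * (Gf t')^(q-1)) t := by
      intro t s
      by_cases hst : s ≤ t
      · rw [Set.indicator_of_mem (Set.mem_Iic.2 hst), Set.indicator_of_mem (Set.mem_Ici.2 hst)]
      · rw [Set.indicator_of_notMem (by simpa using hst),
          Set.indicator_of_notMem (by simpa using hst), zero_mul]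
    calc P = ∫⁻ t, Gf t * (Gf t)^(q-1) ∂ν := lintegral_congr fun t => hsplit (Gf t)
      _ = ∫⁻ t, (∫⁻ s, (Set.Iic t).indicator h s ∂volume) * (Gf t)^(q-1) ∂ν := by
          apply lintegral_congr; intro t
          rw [lintegral_indicator measurableSet_Iic]
      _ = ∫⁻ t, ∫⁻ s, (Set.Iic t).indicator h s * (Gf t)^(q-1) ∂volume ∂ν := by
          apply lintegral_congr; intro t
          rw [lintegral_mul_const _ (hmeas_h.indicator measurableSet_Iic)]
      _ = ∫⁻ s, ∫⁻ t, (Set.Iic t).indicator h s * (Gf t)^(q-1) ∂ν ∂volume := by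
          apply lintegral_lintegral_swap
          have heq : Function.uncurry (fun t s => (Set.Iic t).indicator h s * (Gf t)^(q-1))
              = fun p : ℝ × ℝ =>
                ({p : ℝ × ℝ | p.2 ≤ p.1}.indicator (fun p => h p.2) p) * (Gf p.1)^(q-1) := by
            ext ⟨t, s⟩
            by_cases hst : s ≤ t <;>
              simp [Function.uncurry, Set.indicator_apply, hst]
          rw [heq]
          exact (((hmeas_h.comp measurable_snd).indicator
            (measurableSet_le measurable_snd measurable_fst)).mul
            ((hGf_meas.comp measurable_fst).pow_const _)).aemeasurable
      _ = ∫⁻ s, h s * ∫⁻ t in Set.Ici s, (Gf t)^(q-1) ∂ν ∂volume := by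
          apply lintegral_congr; intro s
          rw [show (fun t => (Set.Iic t).indicator h s * (Gf t)^(q-1))
              = fun t => (Set.Ici s).indicator (fun t' => h s * (Gf t')^(q-1)) t from
            funext fun t => hind t s]
          rw [lintegral_indicator measurableSet_Ici,
            lintegral_const_mul _ (hGf_meas.pow_const _)]
      _ ≤ ∫⁻ s, h s * (P ^ (1 - 1/q) * ENNReal.ofReal (ψ s)) ∂volume := by
          apply lintegral_mono; intro s
          dsimp only
          by_cases hs : s ∈ K
          · exact mul_le_mul_right (hHolder s hs) _
          · rw [hh_zero s hs, zero_mul, zero_mul]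
      _ = P ^ (1 - 1/q) * L1 := by
          rw [hL1def, ← lintegral_const_mul' _ _
            (ENNReal.rpow_ne_top_of_nonneg hexp hPfin)]
          apply lintegral_congr; intro s; ring
  have hR0L1 : R0 ^ (1/q) ≤ L1 := by
    by_cases hP0 : P = 0
    · have hR00 : R0 = 0 := le_antisymm (hP0 ▸ hR0P) zero_le
      rw [hR00, ENNReal.zero_rpow_of_pos hiq]
      exact zero_le
    · have hPP : P = P ^ (1 - 1/q) * P ^ (1/q) := by
        rw [← ENNReal.rpow_add _ _ hP0 hPfin, sub_add_cancel, ENNReal.rpow_one]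
      have hfac0 : P ^ (1 - 1/q) ≠ 0 := by
        simp only [ne_eq, ENNReal.rpow_eq_zero_iff, not_or, not_and, not_lt]
        constructor
        · intro hc; exact absurd hc hP0
        · intro hc; exact absurd hc hPfin
      have hfact : P ^ (1 - 1/q) ≠ ⊤ := ENNReal.rpow_ne_top_of_nonneg hexp hPfin
      have h1 : P ^ (1-1/q) * P ^ (1/q) ≤ P ^ (1-1/q) * L1 := hPP ▸ hMain
      have h2 : P ^ (1/q) ≤ L1 := (ENNReal.mul_le_mul_iff_right hfac0 hfact).1 h1
      exact le_trans (ENNReal.rpow_le_rpow hR0P hiq.le) h2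
  -- upper bound for the RHS by R0
  have hmeasuq : Measurable fun t => ENNReal.ofReal (|u t| ^ q) :=
    ((hu.continuous.abs.rpow_const (fun x => Or.inr hq0.le)).measurable).ennreal_ofReal
  have hRHS : ENNReal.ofReal (∫ t in S, |u t| ^ q * (-(deriv (fun s => ψ s ^ q) t))) ≤ R0 := by
    have e0 : (∫ t in S, |u t| ^ q * (-(deriv (fun s => ψ s ^ q) t)))
        = ∫ t in S, |u t| ^ q * (Measure.rnDeriv ν volume t).toReal :=
      integral_congr_ae (ae_restrict_of_ae hDae)
    rw [e0]
    by_cases hInt : IntegrableOn (fun t => |u t| ^ q * (Measure.rnDeriv ν volume t).toReal)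
        S volume
    · have e1 : ENNReal.ofReal (∫ t in S, |u t| ^ q * (Measure.rnDeriv ν volume t).toReal)
          = ∫⁻ t in S, ENNReal.ofReal (|u t| ^ q * (Measure.rnDeriv ν volume t).toReal) ∂volume :=
        ofReal_integral_eq_lintegral_ofReal hInt
          (Filter.Eventually.of_forall fun t =>
            mul_nonneg (Real.rpow_nonneg (abs_nonneg _) _) ENNReal.toReal_nonneg)
      rw [e1]
      calc ∫⁻ t in S, ENNReal.ofReal (|u t| ^ q * (Measure.rnDeriv ν volume t).toReal) ∂volume
          ≤ ∫⁻ t in S, ENNReal.ofReal (|u t| ^ q) * Measure.rnDeriv ν volume t ∂volume := by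
            apply lintegral_mono; intro t
            dsimp only
            rw [ENNReal.ofReal_mul (Real.rpow_nonneg (abs_nonneg _) q)]
            exact mul_le_mul_right ENNReal.ofReal_toReal_le _
        _ ≤ ∫⁻ t, ENNReal.ofReal (|u t| ^ q) * Measure.rnDeriv ν volume t ∂volume :=
            setLIntegral_le_lintegral _ _
        _ = ∫⁻ t, ENNReal.ofReal (|u t| ^ q) ∂(volume.withDensity (Measure.rnDeriv ν volume)) := by
            rw [lintegral_withDensity_eq_lintegral_mul _ (Measure.measurable_rnDeriv ν volume)
              hmeasuq]
            exact lintegral_congr fun t => (mul_comm _ _)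
        _ ≤ R0 := lintegral_mono' (Measure.withDensity_rnDeriv_le ν volume) le_rfl
    · rw [integral_undef hInt]
      simp
  have hIRnonneg : 0 ≤ ∫ t in S, |u t| ^ q * (-(deriv (fun s => ψ s ^ q) t)) := by
    apply integral_nonneg_of_ae
    filter_upwards [ae_restrict_of_ae hDae] with t ht
    rw [ht]
    exact mul_nonneg (Real.rpow_nonneg (abs_nonneg _) _) ENNReal.toReal_nonneg
  -- lower bound for the LHS by L1
  have hwint : IntegrableOn (fun s => |deriv u s| * w s) S volume := by
    have hcontK : ContinuousOn (fun s => |deriv u s| * w s) K := fun x hx =>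
      ((hu'cont.abs.continuousAt.mul (hwcont x (hKS hx).1))).continuousWithinAt
    have h1 : IntegrableOn (fun s => |deriv u s| * w s) K volume :=
      hcontK.integrableOn_compact hKcomp
    have h2 : IntegrableOn (fun s => |deriv u s| * w s) (S \ K) volume := by
      have heq : Set.EqOn (fun s => |deriv u s| * w s) (fun _ => (0:ℝ)) (S \ K) := by
        intro x hx
        have hz : deriv u x = 0 := by
          by_contra hne
          exact hx.2 (support_deriv_subset (by simpa [Function.mem_support] using hne))
        simp [hz]
      exact (integrableOn_congr_fun heq
        (hSmeas.diff (isClosed_tsupport u).measurableSet)).2 integrableOn_zero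
    exact (h1.union h2).mono_set
      (fun x hx => by by_cases hxK : x ∈ K; exacts [Or.inl hxK, Or.inr ⟨hx, hxK⟩])
  have hLHSnonneg : 0 ≤ ∫ s in S, |deriv u s| * w s := by
    apply integral_nonneg_of_ae
    rw [EventuallyLE, ae_restrict_iff' hSmeas]
    exact Filter.Eventually.of_forall fun s hs =>
      mul_nonneg (abs_nonneg _) (hwpos s hs.1).le
  have hLHS : L1 ≤ ENNReal.ofReal (∫ s in S, |deriv u s| * w s) := by
    have e1 : L1 ≤ ∫⁻ s, h s * ENNReal.ofReal (w s) ∂volume := by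
      apply lintegral_mono; intro s
      dsimp only
      by_cases hs : s ∈ K
      · exact mul_le_mul_right (ENNReal.ofReal_le_ofReal (hψ_le_w s (hKS hs).1)) _
      · rw [hh_zero s hs, zero_mul, zero_mul]
    have e2 : (∫⁻ s, h s * ENNReal.ofReal (w s) ∂volume)
        = ∫⁻ s in S, h s * ENNReal.ofReal (w s) ∂volume := by
      refine (setLIntegral_eq_of_support_subset ?_).symm
      intro s hs
      by_contra hsS
      have hsK : s ∉ K := fun hc => hsS (hKS hc)
      rw [Function.mem_support, hh_zero s hsK, zero_mul] at hs
      exact hs rfl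
    have e3 : (∫⁻ s in S, h s * ENNReal.ofReal (w s) ∂volume)
        = ENNReal.ofReal (∫ s in S, |deriv u s| * w s) := by
      rw [ofReal_integral_eq_lintegral_ofReal hwint
        (by rw [EventuallyLE, ae_restrict_iff' hSmeas]
            exact Filter.Eventually.of_forall fun s hs =>
              mul_nonneg (abs_nonneg _) (hwpos s hs.1).le)]
      exact lintegral_congr fun s => (ENNReal.ofReal_mul (abs_nonneg _)).symm
    rw [← e3, ← e2]
    exact e1
  -- conclusion
  rw [ge_iff_le, ← ENNReal.ofReal_le_ofReal_iff hLHSnonneg]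
  calc ENNReal.ofReal ((∫ t in S, |u t| ^ q * (-(deriv (fun s => ψ s ^ q) t))) ^ (1/q))
      = (ENNReal.ofReal (∫ t in S, |u t| ^ q * (-(deriv (fun s => ψ s ^ q) t)))) ^ (1/q) :=
        (ENNReal.ofReal_rpow_of_nonneg hIRnonneg hiq.le).symm
    _ ≤ R0 ^ (1/q) := ENNReal.rpow_le_rpow hRHS hiq.le
    _ ≤ L1 := hR0L1
    _ ≤ ENNReal.ofReal (∫ s in S, |deriv u s| * w s) := hLHS
end

section
/- Let v : (0,η] → (0,∞) be locally Lipschitz, nondecreasing, with lim_{r→0+} v(r) = 0, and suppose there is C₀ > 0 such that v(r)/(r v'(r)) ≥ C₀ at every r ∈ (0,η] where v is differentiable with v'(r) ≠ 0. Then v(r) ≥ v(η) (r/η)^{1/C₀} for all r ∈ (0,η]. -/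
open MeasureTheory Set Filter Topology

theorem stmt10 (η : ℝ) (hη : 0 < η)
    (v : ℝ → ℝ)
    (hvlip : ∀ a : ℝ, 0 < a → a ≤ η → ∃ K : NNReal, LipschitzOnWith K v (Set.Icc a η))
    (hvmono : MonotoneOn v (Set.Ioc 0 η))
    (hvpos : ∀ r ∈ Set.Ioc (0:ℝ) η, 0 < v r)
    (hv0 : Tendsto v (nhdsWithin 0 (Set.Ioi 0)) (nhds 0))
    (C₀ : ℝ) (hC₀ : 0 < C₀)
    (hNDC : ∀ r ∈ Set.Ioc (0:ℝ) η, ∀ d : ℝ, d ≠ 0 → HasDerivAt v d r →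
      C₀ ≤ v r / (r * d)) :
    ∀ r ∈ Set.Ioc (0:ℝ) η, v η * (r / η) ^ (1 / C₀) ≤ v r := by
  intro r hr
  obtain ⟨hr0, hrη⟩ := hr
  set c : ℝ := 1 / C₀ with hc
  have hcpos : 0 < c := by positivity
  obtain ⟨K, hK⟩ := hvlip r hr0 hrη
  have hvr_pos : 0 < v r := hvpos r ⟨hr0, hrη⟩
  have hvη_pos : 0 < v η := hvpos η ⟨hη, le_refl _⟩
  -- the clamp function onto [r, η]
  set q : ℝ → ℝ := fun x => max r (min x η) with hq
  have hq_mem : ∀ x, q x ∈ Icc r η := by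
    intro x
    constructor
    · exact le_max_left _ _
    · exact max_le hrη (min_le_right _ _)
  have hq_mono : Monotone q := fun x y hxy =>
    max_le_max le_rfl (min_le_min hxy le_rfl)
  have hq_cont : Continuous q := by
    exact continuous_const.max (continuous_id.min continuous_const)
  have hq_eq : ∀ x ∈ Icc r η, q x = x := by
    intro x hx
    simp only [hq]
    rw [min_eq_left hx.2, max_eq_right hx.1]
  have hIcc_sub : Icc r η ⊆ Ioc 0 η := fun x hx => ⟨lt_of_lt_of_le hr0 hx.1, hx.2⟩
  set w : ℝ → ℝ := fun x => v (q x) with hw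
  have hw_pos : ∀ x, 0 < w x := fun x => hvpos _ (hIcc_sub (hq_mem x))
  have hw_mono : Monotone w := fun x y hxy =>
    hvmono (hIcc_sub (hq_mem x)) (hIcc_sub (hq_mem y)) (hq_mono hxy)
  have hw_ge : ∀ x, v r ≤ w x := fun x =>
    hvmono (hIcc_sub ⟨le_refl r, hrη⟩) (hIcc_sub (hq_mem x)) (hq_mem x).1
  have hw_cont : Continuous w :=
    (hK.continuousOn.comp_continuous hq_cont hq_mem)
  set φ : ℝ → ℝ := fun x => Real.log (w x) - c * Real.log (q x) with hφ
  have hqx_pos : ∀ x, 0 < q x := fun x => lt_of_lt_of_le hr0 (hq_mem x).1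
  have hφ_cont : Continuous φ := by
    apply Continuous.sub
    · exact (Real.continuousOn_log.comp_continuous hw_cont
        (fun x => ne_of_gt (hw_pos x)))
    · exact continuous_const.mul (Real.continuousOn_log.comp_continuous hq_cont
        (fun x => ne_of_gt (hqx_pos x)))
  set L : ℝ := (K : ℝ) / v r with hL
  have hL0 : 0 ≤ L := div_nonneg K.2 hvr_pos.le
  -- the function G = L x - φ x is monotone
  have hG_mono : Monotone (fun x => L * x - φ x) := by
    intro x y hxy
    show L * x - φ x ≤ L * y - φ y
    have h1 : w y - w x ≤ (K : ℝ) * (y - x) := by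
      have hq_lip : q y - q x ≤ y - x := by
        simp only [hq]
        rcases le_total y η with h | h
        · rcases le_total x η with h' | h'
          · rw [min_eq_left h, min_eq_left h']
            rcases le_total r x with h'' | h''
            · rw [max_eq_right h'', max_eq_right (h''.trans hxy)]
            · rw [max_eq_left h'']
              rcases le_total r y with h3 | h3
              · rw [max_eq_right h3]; linarith
              · rw [max_eq_left h3]; linarith
          · have : y ≤ x := h.trans h'
            have hyx : y = x := le_antisymm this hxy
            simp [hyx]
        · rw [min_eq_right h]
          rcases le_total x η with h' | h'
          · rw [min_eq_left h']
            rcases le_total r x with h'' | h''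
            · rw [max_eq_right h'', max_eq_right (h''.trans h')]; linarith
            · rw [max_eq_left h'']
              rcases le_total r η with h3 | h3
              · rw [max_eq_right h3]; linarith
              · rw [max_eq_left h3]; linarith
          · rw [min_eq_right h']
            simp only [sub_self]
            linarith
        -- end cases
      have hd := hK.dist_le_mul _ (hq_mem y) _ (hq_mem x)
      rw [Real.dist_eq] at hd
      calc w y - w x ≤ |w y - w x| := le_abs_self _
        _ ≤ (K : ℝ) * |q y - q x| := hd
        _ ≤ (K : ℝ) * (y - x) := by
            apply mul_le_mul_of_nonneg_left _ K.2
            rw [abs_of_nonneg (sub_nonneg.mpr (hq_mono hxy))]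
            exact hq_lip
    have h2 : Real.log (w y) - Real.log (w x) ≤ (w y - w x) / v r := by
      have hwle : w x ≤ w y := hw_mono hxy
      have hx_pos := hw_pos x
      have hy_pos := hw_pos y
      rw [← Real.log_div (ne_of_gt hy_pos) (ne_of_gt hx_pos)]
      have h3 : Real.log (w y / w x) ≤ w y / w x - 1 :=
        Real.log_le_sub_one_of_pos (by positivity)
      have h4 : w y / w x - 1 = (w y - w x) / w x := by field_simp
      rw [h4] at h3
      refine h3.trans ?_
      gcongr
      · exact hw_ge x
    have h5 : c * Real.log (q x) ≤ c * Real.log (q y) := by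
      apply mul_le_mul_of_nonneg_left _ hcpos.le
      exact Real.log_le_log (hqx_pos x) (hq_mono hxy)
    have h6 : φ y - φ x ≤ L * (y - x) := by
      have : φ y - φ x ≤ Real.log (w y) - Real.log (w x) := by
        simp only [hφ]; linarith
      refine this.trans (h2.trans ?_)
      rw [hL]
      calc (w y - w x) / v r ≤ ((K : ℝ) * (y - x)) / v r := by gcongr
        _ = (K : ℝ) / v r * (y - x) := by ring
    linarith
  -- build Stieltjes function
  set G : StieltjesFunction ℝ :=
    ⟨fun x => L * x - φ x, hG_mono,
      fun x => ((continuous_const.mul continuous_id).sub hφ_cont).continuousWithinAt⟩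
    with hG
  have hGfun : ∀ x, G x = L * x - φ x := fun x => rfl
  -- a.e. derivative bound
  have key : ∀ᵐ x, x ∈ Ioo r η → ENNReal.ofReal L ≤ G.measure.rnDeriv volume x := by
    filter_upwards [G.ae_hasDerivAt, Measure.rnDeriv_lt_top G.measure volume]
      with x hx hlt hmem
    set d : ℝ := (G.measure.rnDeriv volume x).toReal with hd
    have hx0 : 0 < x := lt_trans hr0 hmem.1
    have hxη : x < η := hmem.2
    -- φ has derivative L - d at x
    have hφd : HasDerivAt φ (L - d) x := by
      have h1 : HasDerivAt (fun y => L * y) L x := by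
        simpa using (hasDerivAt_id x).const_mul L
      have h2 : HasDerivAt (fun y => L * y - G y) (L - d) x := h1.sub hx
      have h3 : (fun y => L * y - G y) = φ := by
        funext y; simp [hGfun]
      rwa [h3] at h2
    -- near x, φ equals y ↦ log (v y) - c * log y
    have hev : ∀ᶠ y in 𝓝 x, φ y = Real.log (v y) - c * Real.log y := by
      filter_upwards [Ioo_mem_nhds hmem.1 hmem.2] with y hy
      have hqy : q y = y := hq_eq y ⟨hy.1.le, hy.2.le⟩
      simp only [hφ, hw, hqy]
    have hψd : HasDerivAt (fun y => Real.log (v y) - c * Real.log y) (L - d) x :=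
      hφd.congr_of_eventuallyEq (by filter_upwards [hev] with y hy using hy.symm)
    have hlogd : HasDerivAt (fun y => Real.log (v y)) ((L - d) + c * x⁻¹) x := by
      have h1 : HasDerivAt (fun y => c * Real.log y) (c * x⁻¹) x :=
        (Real.hasDerivAt_log (ne_of_gt hx0)).const_mul c
      have h2 : HasDerivAt (fun y => (Real.log (v y) - c * Real.log y) + c * Real.log y)
          ((L - d) + c * x⁻¹) x := hψd.add h1
      have h3 : (fun y => (Real.log (v y) - c * Real.log y) + c * Real.log y)
          = fun y => Real.log (v y) := by funext y; ring
      rwa [h3] at h2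
    -- v has derivative e = v x * ((L - d) + c * x⁻¹)
    have hvx_pos : 0 < v x := hvpos x ⟨hx0, hxη.le⟩
    set e : ℝ := v x * ((L - d) + c * x⁻¹) with he_def
    have hvd : HasDerivAt v e x := by
      have h1 : HasDerivAt (fun y => Real.exp (Real.log (v y)))
          (Real.exp (Real.log (v x)) * ((L - d) + c * x⁻¹)) x := hlogd.exp
      rw [Real.exp_log hvx_pos] at h1
      apply h1.congr_of_eventuallyEq
      filter_upwards [Ioo_mem_nhds hmem.1 hmem.2] with y hy
      have : 0 < v y := hvpos y ⟨lt_trans hr0 hy.1, hy.2.le⟩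
      rw [Real.exp_log this]
    -- show L ≤ d
    have hLd : L ≤ d := by
      by_contra hcon
      push_neg at hcon
      have hp : 0 < L - d := sub_pos.mpr hcon
      have he_pos : 0 < e := by
        apply mul_pos hvx_pos
        have : 0 < c * x⁻¹ := by positivity
        linarith
      have hN := hNDC x ⟨hx0, hxη.le⟩ e (ne_of_gt he_pos) hvd
      -- C₀ ≤ v x / (x * e)
      have hxe : 0 < x * e := mul_pos hx0 he_pos
      rw [le_div_iff₀ hxe] at hN
      -- C₀ * (x * e) ≤ v x
      have hxx : x * x⁻¹ = 1 := mul_inv_cancel₀ (ne_of_gt hx0)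
      have hkey : C₀ * (x * e) = C₀ * x * v x * (L - d) + v x := by
        rw [he_def, hc]
        field_simp
      have hpos : 0 < C₀ * x * v x * (L - d) :=
        mul_pos (mul_pos (mul_pos hC₀ hx0) hvx_pos) hp
      linarith
    exact ENNReal.ofReal_le_of_le_toReal hLd
  -- integrate
  have hint1 : ENNReal.ofReal L * volume (Ioo r η)
      ≤ ∫⁻ x in Ioo r η, G.measure.rnDeriv volume x := by
    rw [← setLIntegral_const]
    exact setLIntegral_mono_ae' measurableSet_Ioo key
  have hint2 : (∫⁻ x in Ioo r η, G.measure.rnDeriv volume x)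
      ≤ ∫⁻ x in Ioc r η, G.measure.rnDeriv volume x :=
    lintegral_mono_set Ioo_subset_Ioc_self
  have hint3 : (∫⁻ x in Ioc r η, G.measure.rnDeriv volume x)
      ≤ G.measure (Ioc r η) := by
    rw [← withDensity_apply _ measurableSet_Ioc]
    exact (Measure.withDensity_rnDeriv_le G.measure volume) _
  have hmeas : G.measure (Ioc r η) = ENNReal.ofReal (G η - G r) :=
    G.measure_Ioc r η
  have hvol : volume (Ioo r η) = ENNReal.ofReal (η - r) := Real.volume_Ioo
  have hchain : ENNReal.ofReal (L * (η - r)) ≤ ENNReal.ofReal (G η - G r) := by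
    rw [ENNReal.ofReal_mul hL0]
    calc ENNReal.ofReal L * ENNReal.ofReal (η - r)
        = ENNReal.ofReal L * volume (Ioo r η) := by rw [hvol]
      _ ≤ ∫⁻ x in Ioo r η, G.measure.rnDeriv volume x := hint1
      _ ≤ ∫⁻ x in Ioc r η, G.measure.rnDeriv volume x := hint2
      _ ≤ G.measure (Ioc r η) := hint3
      _ = ENNReal.ofReal (G η - G r) := hmeas
  have hGmono' : G r ≤ G η := hG_mono hrη
  have hfinal : L * (η - r) ≤ G η - G r :=
    (ENNReal.ofReal_le_ofReal_iff (by linarith)).mp hchain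
  have hφle : φ η ≤ φ r := by
    have h1 : G η = L * η - φ η := rfl
    have h2 : G r = L * r - φ r := rfl
    rw [h1, h2] at hfinal
    linarith
  -- unfold φ
  have hqr : q r = r := hq_eq r ⟨le_refl _, hrη⟩
  have hqη : q η = η := hq_eq η ⟨hrη, le_refl _⟩
  have hφr : φ r = Real.log (v r) - c * Real.log r := by
    simp only [hφ, hw, hqr]
  have hφη : φ η = Real.log (v η) - c * Real.log η := by
    simp only [hφ, hw, hqη]
  rw [hφr, hφη] at hφle
  -- conclude
  have hrη_pos : 0 < r / η := div_pos hr0 hη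
  have hlhs_pos : 0 < v η * (r / η) ^ c := by
    apply mul_pos hvη_pos (Real.rpow_pos_of_pos hrη_pos _)
  have hlog : Real.log (v η * (r / η) ^ c) ≤ Real.log (v r) := by
    rw [Real.log_mul (ne_of_gt hvη_pos) (ne_of_gt (Real.rpow_pos_of_pos hrη_pos _)),
      Real.log_rpow hrη_pos, Real.log_div (ne_of_gt hr0) (ne_of_gt hη)]
    linarith
  exact (Real.log_le_log_iff hlhs_pos hvr_pos).mp hlog
end

section
/- Let v : (0,η] → (0,∞) be locally Lipschitz, nonincreasing, with lim_{r→0+} v(r) = ∞, and suppose there is C₀ > 0 such that −v(r)/(r v'(r)) ≥ C₀ at every r ∈ (0,η] where v is differentiable with v'(r) ≠ 0. Then v(r) ≤ v(η) (r/η)^{−1/C₀} for all r ∈ (0,η]. -/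
open MeasureTheory Set Filter Topology

/-- FTC-type inequality for a monotone Lipschitz-type function: if `f` is monotone,
satisfies a one-sided Lipschitz bound, and has derivative `≤ φ` wherever it is
differentiable on `(a,b)`, then `f b - f a ≤ ∫ x in Ioc a b, φ x`. -/
lemma key_ftc {f φ : ℝ → ℝ} {a b C : ℝ} (hab : a ≤ b)
    (hmono : Monotone f) (hcont : Continuous f)
    (hlip : ∀ x y : ℝ, x ≤ y → f y - f x ≤ C * (y - x))
    (hφ : MeasureTheory.IntegrableOn φ (Set.Ioc a b))
    (hd : ∀ x ∈ Set.Ioo a b, ∀ d : ℝ, HasDerivAt f d x → d ≤ φ x) :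
    f b - f a ≤ ∫ x in Set.Ioc a b, φ x := by
  set S : StieltjesFunction ℝ := ⟨f, hmono, fun x => hcont.continuousWithinAt⟩ with hS
  have hGmono : Monotone (fun x => C * x - f x) := by
    intro x y hxy
    have := hlip x y hxy
    simp only
    nlinarith
  have hGcont : Continuous (fun x : ℝ => C * x - f x) :=
    (continuous_const.mul continuous_id).sub hcont
  set T : StieltjesFunction ℝ := ⟨fun x => C * x - f x, hGmono,
    fun x => hGcont.continuousWithinAt⟩ with hT
  have hC : 0 ≤ C := by
    have h1 := hlip 0 1 zero_le_one
    have h2 := hmono (zero_le_one : (0:ℝ) ≤ 1)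
    nlinarith
  haveI : IsLocallyFiniteMeasure (S.measure + T.measure) := by
    constructor
    intro x
    obtain ⟨s, hs, h1⟩ := S.measure.finiteAt_nhds x
    obtain ⟨t, ht, h2⟩ := T.measure.finiteAt_nhds x
    refine ⟨s ∩ t, Filter.inter_mem hs ht, ?_⟩
    rw [Measure.add_apply]
    exact ENNReal.add_lt_top.2
      ⟨lt_of_le_of_lt (measure_mono Set.inter_subset_left) h1,
        lt_of_le_of_lt (measure_mono Set.inter_subset_right) h2⟩
  have hsum : S.measure + T.measure = (ENNReal.ofReal C) • volume := by
    refine MeasureTheory.Measure.ext_of_Ioc _ _ (fun x y hxy => ?_)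
    rw [Measure.add_apply, StieltjesFunction.measure_Ioc, StieltjesFunction.measure_Ioc,
      Measure.smul_apply, Real.volume_Ioc, smul_eq_mul]
    show ENNReal.ofReal (f y - f x) + ENNReal.ofReal ((C * y - f y) - (C * x - f x)) = _
    have h1 : (0:ℝ) ≤ f y - f x := sub_nonneg.2 (hmono hxy.le)
    have h2 : (0:ℝ) ≤ (C * y - f y) - (C * x - f x) := sub_nonneg.2 (hGmono hxy.le)
    rw [← ENNReal.ofReal_add h1 h2, ← ENNReal.ofReal_mul hC]
    congr 1
    ring
  have hac : S.measure ≪ volume := by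
    refine MeasureTheory.Measure.AbsolutelyContinuous.mk (fun s hs h0 => ?_)
    have h1 : S.measure s + T.measure s = ENNReal.ofReal C * volume s := by
      rw [← Measure.add_apply, hsum, Measure.smul_apply, smul_eq_mul]
    rw [h0, mul_zero] at h1
    exact le_antisymm (le_trans le_self_add h1.le) zero_le
  have hwd : volume.withDensity (S.measure.rnDeriv volume) = S.measure :=
    MeasureTheory.Measure.withDensity_rnDeriv_eq S.measure volume hac
  have hIoc : S.measure (Set.Ioc a b)
      = ∫⁻ x in Set.Ioc a b, S.measure.rnDeriv volume x ∂volume := by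
    conv_lhs => rw [← hwd]
    rw [MeasureTheory.withDensity_apply _ measurableSet_Ioc]
  have hfin : S.measure (Set.Ioc a b) ≠ ⊤ := by
    rw [StieltjesFunction.measure_Ioc]
    exact ENNReal.ofReal_ne_top
  have hint : MeasureTheory.IntegrableOn
      (fun x => (S.measure.rnDeriv volume x).toReal) (Set.Ioc a b) volume := by
    refine MeasureTheory.integrable_toReal_of_lintegral_ne_top
      ((Measure.measurable_rnDeriv _ _).aemeasurable) ?_
    rw [← hIoc]
    exact hfin
  have heq : f b - f a = ∫ x in Set.Ioc a b, (S.measure.rnDeriv volume x).toReal := by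
    rw [MeasureTheory.integral_toReal ((Measure.measurable_rnDeriv _ _).aemeasurable)
      (MeasureTheory.ae_restrict_of_ae (Measure.rnDeriv_lt_top _ _)), ← hIoc,
      StieltjesFunction.measure_Ioc]
    show f b - f a = (ENNReal.ofReal (f b - f a)).toReal
    rw [ENNReal.toReal_ofReal (sub_nonneg.2 (hmono hab))]
  rw [heq]
  refine MeasureTheory.integral_mono_ae hint hφ ?_
  have h1 : ∀ᵐ x ∂(volume.restrict (Set.Ioc a b)),
      HasDerivAt f ((S.measure.rnDeriv volume x).toReal) x :=
    MeasureTheory.ae_restrict_of_ae S.ae_hasDerivAt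
  have h2 : ∀ᵐ x ∂(volume.restrict (Set.Ioc a b)), x ∈ Set.Ioo a b := by
    rw [← MeasureTheory.Measure.restrict_congr_set MeasureTheory.Ioo_ae_eq_Ioc]
    exact MeasureTheory.ae_restrict_mem measurableSet_Ioo
  filter_upwards [h1, h2] with x hx1 hx2
  exact hd x hx2 _ hx1

theorem stmt11 (η : ℝ) (hη : 0 < η)
    (v : ℝ → ℝ)
    (hvlip : ∀ a : ℝ, 0 < a → a ≤ η → ∃ K : NNReal, LipschitzOnWith K v (Set.Icc a η))
    (hvanti : AntitoneOn v (Set.Ioc 0 η))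
    (hvpos : ∀ r ∈ Set.Ioc (0:ℝ) η, 0 < v r)
    (hv0 : Tendsto v (nhdsWithin 0 (Set.Ioi 0)) atTop)
    (C₀ : ℝ) (hC₀ : 0 < C₀)
    (hNDC : ∀ r ∈ Set.Ioc (0:ℝ) η, ∀ d : ℝ, d ≠ 0 → HasDerivAt v d r →
      C₀ ≤ -(v r) / (r * d)) :
    ∀ r ∈ Set.Ioc (0:ℝ) η, v r ≤ v η * (r / η) ^ (-(1 / C₀)) := by
  intro r hr
  obtain ⟨hr0, hrη⟩ := hr
  obtain ⟨K, hK⟩ := hvlip r hr0 hrη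
  have hvη : 0 < v η := hvpos η ⟨hη, le_rfl⟩
  -- the clamp function
  set c : ℝ → ℝ := fun x => max r (min x η) with hc
  have hcmem : ∀ x, c x ∈ Set.Icc r η := fun x =>
    ⟨le_max_left _ _, max_le hrη (min_le_right _ _)⟩
  have hcid : ∀ x ∈ Set.Icc r η, c x = x := by
    intro x hx
    simp only [hc]
    rw [min_eq_left hx.2, max_eq_right hx.1]
  have hcmono : Monotone c := fun x y hxy =>
    max_le_max le_rfl (min_le_min hxy le_rfl)
  have hclip : ∀ x y : ℝ, x ≤ y → c y - c x ≤ y - x := by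
    intro x y hxy
    have h1 : min y η - min x η ≤ y - x := by
      rcases le_total y η with h | h
      · rw [min_eq_left h, min_eq_left (hxy.trans h)]
      · rcases le_total x η with h' | h'
        · rw [min_eq_right h, min_eq_left h']; linarith
        · rw [min_eq_right h, min_eq_right h']; linarith
    have hm : min x η ≤ min y η := min_le_min hxy le_rfl
    have h2 : max r (min y η) - max r (min x η) ≤ min y η - min x η := by
      rcases le_total r (min x η) with h' | h'
      · rw [max_eq_right h', max_eq_right (h'.trans hm)]
      · rcases le_total r (min y η) with h'' | h''
        · rw [max_eq_right h'', max_eq_left h']; linarith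
        · rw [max_eq_left h', max_eq_left h'']; linarith
    simp only [hc]
    linarith
  have hIcc_sub : Set.Icc r η ⊆ Set.Ioc 0 η := fun x hx => ⟨lt_of_lt_of_le hr0 hx.1, hx.2⟩
  have hvposc : ∀ x, 0 < v (c x) := fun x => hvpos _ (hIcc_sub (hcmem x))
  have hvge : ∀ x, v η ≤ v (c x) := fun x =>
    hvanti (hIcc_sub (hcmem x)) ⟨hη, le_rfl⟩ (hcmem x).2
  -- the function F
  set F : ℝ → ℝ := fun x => -Real.log (v (c x)) with hF
  have hFmono : Monotone F := by
    intro x y hxy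
    simp only [hF, neg_le_neg_iff]
    exact Real.log_le_log (hvposc y)
      (hvanti (hIcc_sub (hcmem x)) (hIcc_sub (hcmem y)) (hcmono hxy))
  have hFcont : Continuous F := by
    have hvc : Continuous fun x => v (c x) := by
      refine ContinuousOn.comp_continuous hK.continuousOn ?_ hcmem
      exact (continuous_const.max (continuous_id.min continuous_const))
    have : Continuous fun x => Real.log (v (c x)) := by
      refine ContinuousOn.comp_continuous Real.continuousOn_log hvc ?_
      intro x
      exact (hvposc x).ne'
    exact this.neg
  have hFlip : ∀ x y : ℝ, x ≤ y → F y - F x ≤ ((K : ℝ) / v η) * (y - x) := by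
    intro x y hxy
    have hA : 0 < v (c x) := hvposc x
    have hB : 0 < v (c y) := hvposc y
    have hBA : v (c y) ≤ v (c x) :=
      hvanti (hIcc_sub (hcmem x)) (hIcc_sub (hcmem y)) (hcmono hxy)
    have h1 : F y - F x = Real.log (v (c x)) - Real.log (v (c y)) := by
      simp only [hF]; ring
    have h2 : Real.log (v (c x)) - Real.log (v (c y)) = Real.log (v (c x) / v (c y)) :=
      (Real.log_div hA.ne' hB.ne').symm
    have h3 : Real.log (v (c x) / v (c y)) ≤ v (c x) / v (c y) - 1 :=
      Real.log_le_sub_one_of_pos (div_pos hA hB)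
    have h4 : v (c x) / v (c y) - 1 = (v (c x) - v (c y)) / v (c y) := by
      field_simp
    have h5 : v (c x) - v (c y) ≤ (K : ℝ) * (y - x) := by
      have hd := hK.dist_le_mul _ (hcmem x) _ (hcmem y)
      rw [Real.dist_eq, Real.dist_eq] at hd
      have h6 : |c x - c y| ≤ y - x := by
        rw [abs_sub_comm, abs_of_nonneg (sub_nonneg.2 (hcmono hxy))]
        exact hclip x y hxy
      calc v (c x) - v (c y) ≤ |v (c x) - v (c y)| := le_abs_self _
        _ ≤ (K : ℝ) * |c x - c y| := hd
        _ ≤ (K : ℝ) * (y - x) := by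
            exact mul_le_mul_of_nonneg_left h6 (K.coe_nonneg)
    have h7 : (v (c x) - v (c y)) / v (c y) ≤ ((K : ℝ) * (y - x)) / v η := by
      apply div_le_div₀ (mul_nonneg K.coe_nonneg (sub_nonneg.2 hxy)) h5 hvη (hvge y)
    calc F y - F x = Real.log (v (c x) / v (c y)) := by rw [h1, h2]
      _ ≤ (v (c x) - v (c y)) / v (c y) := by rw [← h4]; exact h3
      _ ≤ ((K : ℝ) * (y - x)) / v η := h7
      _ = ((K : ℝ) / v η) * (y - x) := by ring
  -- derivative bound
  have hd : ∀ x ∈ Set.Ioo r η, ∀ d : ℝ, HasDerivAt F d x → d ≤ 1 / (C₀ * x) := by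
    intro x hx d hder
    have hx0 : 0 < x := lt_trans hr0 hx.1
    have hxmem : x ∈ Set.Icc r η := ⟨hx.1.le, hx.2.le⟩
    have hvx : 0 < v x := hvpos x ⟨hx0, hx.2.le⟩
    have hFx : F x = -Real.log (v x) := by rw [hF]; simp only; rw [hcid x hxmem]
    -- v = exp (-(F ·)) near x
    have hveq : v =ᶠ[nhds x] fun y => Real.exp (-(F y)) := by
      filter_upwards [isOpen_Ioo.mem_nhds hx] with y hy
      have hymem : y ∈ Set.Icc r η := ⟨hy.1.le, hy.2.le⟩
      have hvy : 0 < v y := hvpos y ⟨lt_trans hr0 hy.1, hy.2.le⟩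
      rw [hF]
      simp only
      rw [hcid y hymem, neg_neg, Real.exp_log hvy]
    have hder2 : HasDerivAt (fun y => Real.exp (-(F y))) (Real.exp (-(F x)) * (-d)) x :=
      (hder.neg).exp
    have hder3 : HasDerivAt v (Real.exp (-(F x)) * (-d)) x :=
      hder2.congr_of_eventuallyEq hveq
    have hexp : Real.exp (-(F x)) = v x := by
      rw [hFx, neg_neg, Real.exp_log hvx]
    rw [hexp] at hder3
    by_cases hd0 : d ≤ 0
    · have : 0 < 1 / (C₀ * x) := by positivity
      linarith
    · push_neg at hd0
      have hD : v x * -d ≠ 0 := by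
        intro h
        rcases mul_eq_zero.1 h with h | h
        · exact hvx.ne' h
        · exact hd0.ne' (by linarith [neg_eq_zero.1 h])
      have hkey := hNDC x ⟨hx0, hx.2.le⟩ _ hD hder3
      have hsimp : -(v x) / (x * (v x * -d)) = 1 / (x * d) := by
        field_simp
      rw [hsimp] at hkey
      have hxd : 0 < x * d := mul_pos hx0 hd0
      rw [le_div_iff₀ hxd] at hkey
      rw [le_div_iff₀ (by positivity : 0 < C₀ * x)]
      nlinarith
  -- integrability of φ
  have hφint : MeasureTheory.IntegrableOn (fun x : ℝ => 1 / (C₀ * x)) (Set.Ioc r η) := by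
    have hcont : ContinuousOn (fun x : ℝ => 1 / (C₀ * x)) (Set.Icc r η) := by
      apply ContinuousOn.div continuousOn_const
        (continuous_const.mul continuous_id).continuousOn
      intro x hx
      have : 0 < x := lt_of_lt_of_le hr0 hx.1
      exact mul_ne_zero hC₀.ne' this.ne'
    exact (hcont.integrableOn_Icc).mono_set Set.Ioc_subset_Icc_self
  -- apply the key lemma
  have hmain := key_ftc hrη hFmono hFcont hFlip hφint hd
  -- compute the integral
  have hintval : ∫ x in Set.Ioc r η, 1 / (C₀ * x) = C₀⁻¹ * Real.log (η / r) := by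
    rw [← intervalIntegral.integral_of_le hrη]
    have : ∀ x : ℝ, 1 / (C₀ * x) = C₀⁻¹ * (1 / x) := by
      intro x
      rw [one_div, mul_inv, one_div]
    simp_rw [this]
    rw [intervalIntegral.integral_const_mul, integral_one_div_of_pos hr0 hη]
  rw [hintval] at hmain
  have hFη : F η = -Real.log (v η) := by
    rw [hF]; simp only; rw [hcid η ⟨hrη, le_rfl⟩]
  have hFr : F r = -Real.log (v r) := by
    rw [hF]; simp only; rw [hcid r ⟨le_rfl, hrη⟩]
  rw [hFη, hFr] at hmain
  -- hmain : -log (v η) - -log (v r) ≤ C₀⁻¹ * log (η / r)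
  have hvr : 0 < v r := hvpos r ⟨hr0, hrη⟩
  have hlog : Real.log (v r) ≤ Real.log (v η) + C₀⁻¹ * Real.log (η / r) := by linarith
  have hrpow : (r / η) ^ (-(1 / C₀)) = Real.exp (C₀⁻¹ * Real.log (η / r)) := by
    rw [Real.rpow_def_of_pos (div_pos hr0 hη)]
    congr 1
    rw [Real.log_div hr0.ne' hη.ne', Real.log_div hη.ne' hr0.ne']
    ring
  calc v r = Real.exp (Real.log (v r)) := (Real.exp_log hvr).symm
    _ ≤ Real.exp (Real.log (v η) + C₀⁻¹ * Real.log (η / r)) := Real.exp_le_exp.2 hlog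
    _ = v η * (r / η) ^ (-(1 / C₀)) := by
        rw [Real.exp_add, Real.exp_log hvη, hrpow]
end

section
/- Let w : (0,∞) → (0,∞) be Lipschitz with lim_{t→0+} w(t) = 0, and suppose w vanishes in infinite order at the origin (there exist C > 0 and r_m → 0+ with w(r_m) ≤ C r_m^m for every m ∈ ℕ). Then the non-degenerate condition fails: for every η > 0, inf { |w(r)/(r w'(r))| : r ∈ (0,η] ∩ Z[φ_w] } = 0, where φ_w is the largest nondecreasing minorant of w on [0,η] and Z[φ_w] is the set of points where φ_w is differentiable with nonzero derivative. -/
open MeasureTheory Set Filter Topology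

/-- `f` vanishes in infinite order at the origin. -/
def VanishesInfiniteOrder (f : ℝ → ℝ) : Prop :=
  ∃ C : ℝ, 0 < C ∧ ∃ r : ℕ → ℝ, (∀ m, 0 < r m) ∧
    Tendsto r atTop (nhds 0) ∧ ∀ m : ℕ, f (r m) ≤ C * (r m) ^ m


lemma key_step (Φ : ℝ → ℝ) (K : NNReal) (hmono : Monotone Φ)
    (hlip : LipschitzWith K Φ) (B : ℝ) (hB : 0 ≤ B) (a b : ℝ) (hab : a ≤ b)
    (hd : ∀ x ∈ Set.Ioo a b, ∀ d : ℝ, HasDerivAt Φ d x → d ≤ B) :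
    Φ b - Φ a ≤ B * (b - a) := by
  set F : StieltjesFunction ℝ := ⟨Φ, hmono, fun x => hlip.continuous.continuousWithinAt⟩ with hF
  have hFx : ∀ x, F x = Φ x := fun _ => rfl
  set G : StieltjesFunction ℝ :=
    ⟨fun x => (K : ℝ) * x - Φ x,
      by
        intro x y hxy
        have := hlip.dist_le_mul x y
        rw [Real.dist_eq, Real.dist_eq] at this
        have h1 : Φ y - Φ x ≤ (K : ℝ) * (y - x) := by
          calc Φ y - Φ x ≤ |Φ y - Φ x| := le_abs_self _
            _ = |Φ x - Φ y| := abs_sub_comm _ _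
            _ ≤ (K : ℝ) * |x - y| := this
            _ = (K : ℝ) * (y - x) := by rw [abs_sub_comm, abs_of_nonneg (by linarith)]
        dsimp; linarith,
      fun x => ((continuous_const.mul continuous_id).sub hlip.continuous).continuousWithinAt⟩
    with hG
  have hsum : F + G = K • StieltjesFunction.id := by
    apply StieltjesFunction.ext
    intro x
    show F x + G x = (K : ℝ) * (StieltjesFunction.id x)
    show Φ x + ((K : ℝ) * x - Φ x) = (K : ℝ) * x
    ring
  have habs : F.measure ≪ (volume : Measure ℝ) := by
    refine Measure.AbsolutelyContinuous.mk (fun s hs h0 => ?_)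
    have h1 : F.measure s + G.measure s = (K • volume : Measure ℝ) s := by
      rw [← Measure.add_apply, ← StieltjesFunction.measure_add, hsum,
        StieltjesFunction.measure_smul, Real.volume_eq_stieltjes_id]
    have h2 : (K • volume : Measure ℝ) s = 0 := by
      simp [Measure.smul_apply, h0]
    have h3 : F.measure s ≤ 0 := by
      rw [← h2, ← h1]; exact le_add_right le_rfl
    exact le_antisymm h3 zero_le
  have hae : ∀ᵐ x ∂(volume : Measure ℝ), x ∈ Set.Ioo a b →
      F.measure.rnDeriv volume x ≤ ENNReal.ofReal B := by
    filter_upwards [F.ae_hasDerivAt, Measure.rnDeriv_lt_top F.measure volume] with x hx hlt hxs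
    have hb : (F.measure.rnDeriv volume x).toReal ≤ B := hd x hxs _ hx
    rw [← ENNReal.ofReal_toReal hlt.ne]
    exact ENNReal.ofReal_le_ofReal hb
  have hmeas : F.measure (Set.Ioc a b) ≤ ENNReal.ofReal (B * (b - a)) := by
    have h1 : F.measure (Set.Ioc a b) = ∫⁻ x in Set.Ioc a b, F.measure.rnDeriv volume x := by
      rw [Measure.setLIntegral_rnDeriv' habs measurableSet_Ioc]
    have h2 : (∫⁻ x in Set.Ioc a b, F.measure.rnDeriv volume x)
        = ∫⁻ x in Set.Ioo a b, F.measure.rnDeriv volume x := by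
      rw [Measure.restrict_congr_set Ioo_ae_eq_Ioc]
    have h3 : (∫⁻ x in Set.Ioo a b, F.measure.rnDeriv volume x)
        ≤ ∫⁻ _x in Set.Ioo a b, ENNReal.ofReal B := by
      refine lintegral_mono_ae ?_
      exact (ae_restrict_iff' measurableSet_Ioo).2 hae
    have h4 : (∫⁻ _x in Set.Ioo a b, ENNReal.ofReal B)
        = ENNReal.ofReal B * volume (Set.Ioo a b) := by
      simp [lintegral_const, mul_comm]
    calc F.measure (Set.Ioc a b) = _ := h1
      _ = _ := h2
      _ ≤ _ := h3
      _ = ENNReal.ofReal B * volume (Set.Ioo a b) := h4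
      _ = ENNReal.ofReal B * ENNReal.ofReal (b - a) := by rw [Real.volume_Ioo]
      _ = ENNReal.ofReal (B * (b - a)) := (ENNReal.ofReal_mul hB).symm
  have h5 : ENNReal.ofReal (Φ b - Φ a) ≤ ENNReal.ofReal (B * (b - a)) := by
    rw [show ENNReal.ofReal (Φ b - Φ a) = F.measure (Set.Ioc a b) from (F.measure_Ioc a b).symm]
    exact hmeas
  rcases le_or_gt (Φ b - Φ a) 0 with h | h
  · nlinarith
  · exact (ENNReal.ofReal_le_ofReal_iff (by nlinarith)).1 h5

lemma calc_aux (c u p η q : ℝ) (hc : 0 < c) (hp : p ≠ 0) (hη : η ≠ 0)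
    (hq : q = 2 / (2 + c)) :
    u / (c * (η * (p * q))) * (η * p - η * (p * q)) = u / 2 := by
  have h2 : (0:ℝ) < 2 + c := by linarith
  subst hq
  field_simp
  ring

set_option maxHeartbeats 1000000 in
theorem stmt12
    (w : ℝ → ℝ) (hwpos : ∀ t : ℝ, 0 < t → 0 < w t)
    (hwlip : ∃ K : NNReal, LipschitzOnWith K w (Set.Ioi 0))
    (hw0 : Tendsto w (nhdsWithin 0 (Set.Ioi 0)) (nhds 0))
    (hvan : VanishesInfiniteOrder w) :
    ∀ η : ℝ, 0 < η → ∀ φ : ℝ → ℝ,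
      (∀ t : ℝ, φ t = sInf (w '' {s : ℝ | t ≤ s ∧ 0 < s ∧ s ≤ η})) →
      sInf {k : ℝ | ∃ r : ℝ, 0 < r ∧ r ≤ η ∧
        (∃ d : ℝ, d ≠ 0 ∧ HasDerivAt φ d r) ∧
        k = |w r / (r * deriv w r)|} = 0 := by
  intro η hη φ hφ
  obtain ⟨K, hK⟩ := hwlip
  set S := {k : ℝ | ∃ r : ℝ, 0 < r ∧ r ≤ η ∧
      (∃ d : ℝ, d ≠ 0 ∧ HasDerivAt φ d r) ∧ k = |w r / (r * deriv w r)|} with hS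
  have hSnn : ∀ k ∈ S, 0 ≤ k := by
    rintro k ⟨r, _, _, _, rfl⟩; exact abs_nonneg _
  by_contra hne0
  have hSne : S.Nonempty := by
    rcases eq_empty_or_nonempty S with h | h
    · exact absurd (h ▸ Real.sInf_empty) hne0
    · exact h
  set c := sInf S with hc
  have hc0 : 0 ≤ c := Real.sInf_nonneg hSnn
  have hcpos : 0 < c := lt_of_le_of_ne hc0 (Ne.symm hne0)
  have hlb : ∀ k ∈ S, c ≤ k := fun k hk => csInf_le ⟨0, hSnn⟩ hk
  -- basic facts about φ
  have hsetEq : ∀ t : ℝ, 0 < t → {s : ℝ | t ≤ s ∧ 0 < s ∧ s ≤ η} = Icc t η := by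
    intro t ht; ext s
    simp only [mem_setOf_eq, mem_Icc]
    exact ⟨fun ⟨h1, _, h3⟩ => ⟨h1, h3⟩, fun ⟨h1, h3⟩ => ⟨h1, lt_of_lt_of_le ht h1, h3⟩⟩
  have hφIcc : ∀ t : ℝ, 0 < t → φ t = sInf (w '' Icc t η) := by
    intro t ht; rw [hφ t, hsetEq t ht]
  have hbdd : ∀ t : ℝ, 0 < t → BddBelow (w '' Icc t η) := by
    intro t ht
    refine ⟨0, ?_⟩
    rintro y ⟨s, hs, rfl⟩
    exact (hwpos s (lt_of_lt_of_le ht hs.1)).le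
  have hφ_le : ∀ t : ℝ, 0 < t → t ≤ η → φ t ≤ w t := by
    intro t ht htη
    rw [hφIcc t ht]
    exact csInf_le (hbdd t ht) ⟨t, ⟨le_refl t, htη⟩, rfl⟩
  have hφ_nonneg : ∀ t : ℝ, 0 < t → 0 ≤ φ t := by
    intro t ht
    rw [hφIcc t ht]
    rcases le_or_gt t η with h | h
    · refine le_csInf ⟨w t, ⟨t, ⟨le_refl t, h⟩, rfl⟩⟩ ?_
      rintro y ⟨s, hs, rfl⟩
      exact (hwpos s (lt_of_lt_of_le ht hs.1)).le
    · rw [Icc_eq_empty (not_le.2 h)]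
      simp [Real.sInf_empty]
  have hφ_mono : ∀ s t : ℝ, 0 < s → s ≤ t → t ≤ η → φ s ≤ φ t := by
    intro s t hs hst htη
    rw [hφIcc s hs, hφIcc t (lt_of_lt_of_le hs hst)]
    exact csInf_le_csInf (hbdd s hs) ⟨w t, ⟨t, ⟨le_refl t, htη⟩, rfl⟩⟩
      (image_mono (f := w) (Icc_subset_Icc_left hst))
  have hφη : φ η = w η := by
    rw [hφIcc η hη, Icc_self, image_singleton, csInf_singleton]
  -- w t ≤ K t
  have hwle : ∀ t : ℝ, 0 < t → w t ≤ K * t := by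
    intro t ht
    have hev : ∀ᶠ s in nhdsWithin (0:ℝ) (Set.Ioi 0), w t ≤ w s + K * (t - s) := by
      filter_upwards [Ioo_mem_nhdsGT_of_mem (left_mem_Ico.2 ht)] with s hs
      have hd := hK.dist_le_mul t (mem_Ioi.2 ht) s (mem_Ioi.2 hs.1)
      rw [Real.dist_eq, Real.dist_eq] at hd
      have h1 : w t - w s ≤ |w t - w s| := le_abs_self _
      have h2 : |t - s| = t - s := abs_of_nonneg (by linarith [hs.2])
      rw [h2] at hd
      linarith
    have hlim : Tendsto (fun s => w s + (K : ℝ) * (t - s)) (nhdsWithin (0:ℝ) (Set.Ioi 0))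
        (nhds ((K : ℝ) * t)) := by
      have h2 : Tendsto (fun s : ℝ => (K : ℝ) * (t - s)) (nhdsWithin (0:ℝ) (Set.Ioi 0))
          (nhds ((K : ℝ) * t)) := by
        have h0 : Continuous (fun s : ℝ => (K : ℝ) * (t - s)) := by continuity
        have := (h0.tendsto 0).mono_left (nhdsWithin_le_nhds (s := Set.Ioi (0:ℝ)))
        simpa using this
      simpa using hw0.add h2
    exact ge_of_tendsto hlim hev
  -- Lipschitz bound for φ on (0, η]
  have hφlip : ∀ s t : ℝ, 0 < s → s ≤ t → t ≤ η → φ t - φ s ≤ K * (t - s) := by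
    intro s t hs hst htη
    have ht : 0 < t := lt_of_lt_of_le hs hst
    have h1 : φ t - K * (t - s) ≤ φ s := by
      rw [hφIcc s hs]
      refine le_csInf ⟨w t, ⟨t, ⟨hst, htη⟩, rfl⟩⟩ ?_
      rintro y ⟨u, hu, rfl⟩
      rcases le_or_gt t u with h | h
      · have : φ t ≤ w u := by
          rw [hφIcc t ht]
          exact csInf_le (hbdd t ht) ⟨u, ⟨h, hu.2⟩, rfl⟩
        have hK0 : (0:ℝ) ≤ K := K.2
        nlinarith
      · have hd := hK.dist_le_mul t (mem_Ioi.2 ht) u (mem_Ioi.2 (lt_of_lt_of_le hs hu.1))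
        rw [Real.dist_eq, Real.dist_eq] at hd
        have h2 : |t - u| = t - u := abs_of_nonneg (by linarith)
        rw [h2] at hd
        have h3 : w t - w u ≤ |w t - w u| := le_abs_self _
        have h4 : φ t ≤ w t := hφ_le t ht htη
        have hK0 : (0:ℝ) ≤ K := K.2
        nlinarith [hu.1]
    linarith
  -- the global monotone Lipschitz extension Φ
  set Φ : ℝ → ℝ := fun t => if t ≤ 0 then 0 else φ (min t η) with hΦdef
  have hΦval : ∀ t : ℝ, 0 < t → Φ t = φ (min t η) := fun t ht => if_neg (not_le.2 ht)
  have hΦeq : ∀ t : ℝ, 0 < t → t ≤ η → Φ t = φ t := by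
    intro t ht htη
    rw [hΦval t ht, min_eq_left htη]
  have hminmem : ∀ t : ℝ, 0 < t → 0 < min t η ∧ min t η ≤ η :=
    fun t ht => ⟨lt_min ht hη, min_le_right _ _⟩
  have hΦmono : Monotone Φ := by
    intro s t hst
    by_cases ht : t ≤ 0
    · have hs : s ≤ 0 := le_trans hst ht
      simp [hΦdef, hs, ht]
    · push_neg at ht
      by_cases hs : s ≤ 0
      · rw [hΦdef]
        simp only [if_pos hs, if_neg (not_le.2 ht)]
        exact hφ_nonneg _ (hminmem t ht).1
      · push_neg at hs
        rw [hΦval s hs, hΦval t ht]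
        exact hφ_mono _ _ (hminmem s hs).1 (min_le_min hst (le_refl η)) (hminmem t ht).2
  have hK0 : (0:ℝ) ≤ K := K.2
  have hΦlip' : ∀ s t : ℝ, s ≤ t → Φ t - Φ s ≤ K * (t - s) := by
    intro s t hst
    by_cases ht : t ≤ 0
    · have hs : s ≤ 0 := le_trans hst ht
      rw [hΦdef]
      simp only [if_pos hs, if_pos ht]
      nlinarith
    · push_neg at ht
      by_cases hs : s ≤ 0
      · rw [hΦdef]
        simp only [if_pos hs, if_neg (not_le.2 ht)]
        have h1 : φ (min t η) ≤ w (min t η) := hφ_le _ (hminmem t ht).1 (hminmem t ht).2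
        have h2 : w (min t η) ≤ K * (min t η) := hwle _ (hminmem t ht).1
        have h3 : min t η ≤ t := min_le_left _ _
        nlinarith
      · push_neg at hs
        rw [hΦval s hs, hΦval t ht]
        have h1 : φ (min t η) - φ (min s η) ≤ K * (min t η - min s η) :=
          hφlip _ _ (hminmem s hs).1 (min_le_min hst (le_refl η)) (hminmem t ht).2
        have h2 : min t η - min s η ≤ t - s := by
          rcases le_total t η with h | h
          · rw [min_eq_left h, min_eq_left (le_trans hst h)]
          · rw [min_eq_right h]
            rcases le_total s η with h' | h'
            · rw [min_eq_left h']; linarith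
            · rw [min_eq_right h']; linarith
        nlinarith
  have hΦlipW : LipschitzWith K Φ := by
    apply LipschitzWith.of_dist_le_mul
    intro x y
    rcases le_total x y with h | h
    · have h1 := hΦlip' x y h
      have h2 : |Φ x - Φ y| = Φ y - Φ x := by
        rw [abs_sub_comm]; exact abs_of_nonneg (by linarith [hΦmono h])
      have h3 : |x - y| = y - x := by
        rw [abs_sub_comm]; exact abs_of_nonneg (by linarith)
      rw [Real.dist_eq, Real.dist_eq, h2, h3]
      exact h1
    · have h1 := hΦlip' y x h
      have h2 : |Φ x - Φ y| = Φ x - Φ y := abs_of_nonneg (by linarith [hΦmono h])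
      have h3 : |x - y| = x - y := abs_of_nonneg (by linarith)
      rw [Real.dist_eq, Real.dist_eq, h2, h3]
      exact h1
  -- derivative transfer: any derivative of Φ inside (0, η) is at most φ x / (c x)
  have hkey : ∀ x ∈ Set.Ioo (0:ℝ) η, ∀ d : ℝ, HasDerivAt Φ d x → d ≤ φ x / (c * x) := by
    intro x hx d hder
    have hdφ : HasDerivAt φ d x := by
      refine hder.congr_of_eventuallyEq ?_
      filter_upwards [Ioo_mem_nhds hx.1 hx.2] with y hy
      exact (hΦeq y hy.1 hy.2.le).symm
    rcases le_or_gt d 0 with hd0 | hd0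
    · exact le_trans hd0 (div_nonneg (hφ_nonneg x hx.1) (mul_pos hcpos hx.1).le)
    · have hmem : |w x / (x * deriv w x)| ∈ S :=
        ⟨x, hx.1, hx.2.le, ⟨d, ne_of_gt hd0, hdφ⟩, rfl⟩
      have hck := hlb _ hmem
      by_cases hD : deriv w x = 0
      · exfalso
        rw [hD, mul_zero, div_zero, abs_zero] at hck
        linarith
      · have hdiff : DifferentiableAt ℝ w x := by
          by_contra hnd
          exact hD (deriv_zero_of_not_differentiableAt hnd)
        -- φ x = w x
        have hφw : φ x = w x := by
          by_contra hnex
          have hlt : φ x < w x := lt_of_le_of_ne (hφ_le x hx.1 hx.2.le) hnex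
          have hcont : ContinuousOn w (Icc x η) :=
            hK.continuousOn.mono (fun y hy => mem_Ioi.2 (lt_of_lt_of_le hx.1 hy.1))
          obtain ⟨s, hsmem, hsmin⟩ :=
            isCompact_Icc.exists_isMinOn (nonempty_Icc.2 hx.2.le) hcont
          have hφx : φ x = w s := by
            rw [hφIcc x hx.1]
            apply IsLeast.csInf_eq
            constructor
            · exact ⟨s, hsmem, rfl⟩
            · rintro y ⟨u, hu, rfl⟩
              exact (isMinOn_iff.1 hsmin) u hu
          have hxs : x < s := by
            rcases eq_or_lt_of_le hsmem.1 with h | h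
            · exfalso; rw [← h] at hφx; exact hnex hφx
            · exact h
          have hconst : ∀ t ∈ Icc x s, φ t = φ x := by
            intro t ht
            have h1 : φ x ≤ φ t := hφ_mono x t hx.1 ht.1 (le_trans ht.2 hsmem.2)
            have h2 : φ t ≤ w s := by
              rw [hφIcc t (lt_of_lt_of_le hx.1 ht.1)]
              exact csInf_le (hbdd t (lt_of_lt_of_le hx.1 ht.1)) ⟨s, ⟨ht.2, hsmem.2⟩, rfl⟩
            linarith
          have hu : UniqueDiffWithinAt ℝ (Icc x s) x :=
            (uniqueDiffOn_Icc hxs) x (left_mem_Icc.2 hxs.le)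
          have h1 : HasDerivWithinAt φ d (Icc x s) x := hdφ.hasDerivWithinAt
          have h2 : HasDerivWithinAt φ 0 (Icc x s) x := by
            have hcc : HasDerivWithinAt (fun _ : ℝ => φ x) 0 (Icc x s) x :=
              hasDerivWithinAt_const _ _ _
            exact hcc.congr (fun t ht => hconst t ht) (hconst x (left_mem_Icc.2 hxs.le))
          have hd00 : d = 0 := by
            have e1 := h1.derivWithin hu
            have e2 := h2.derivWithin hu
            rw [← e1]; exact e2
          exact absurd hd00 (ne_of_gt hd0)
        -- deriv w x = d
        have hDd : deriv w x = d := by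
          have hmin : IsLocalMin (fun y => w y - φ y) x := by
            have : ∀ᶠ y in nhds x, w x - φ x ≤ w y - φ y := by
              filter_upwards [Ioo_mem_nhds hx.1 hx.2] with y hy
              have := hφ_le y hy.1 hy.2.le
              rw [hφw]; linarith
            exact this
          have hg : HasDerivAt (fun y => w y - φ y) (deriv w x - d) x :=
            hdiff.hasDerivAt.sub hdφ
          have := hmin.hasDerivAt_eq_zero hg
          linarith
        rw [hDd] at hck
        have hxd : 0 < x * d := mul_pos hx.1 hd0
        rw [abs_of_pos (div_pos (hwpos x hx.1) hxd), le_div_iff₀ hxd] at hck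
        rw [le_div_iff₀ (mul_pos hcpos hx.1), hφw]
        nlinarith

  -- geometric iteration
  set q : ℝ := 2 / (2 + c) with hqdef
  have hq2 : (0:ℝ) < 2 + c := by linarith
  have hq0 : 0 < q := by positivity
  have hq1 : q < 1 := by
    rw [hqdef, div_lt_one hq2]; linarith
  obtain ⟨A, hA⟩ : ∃ A : ℕ → ℝ, ∀ n, A n = φ (η * q ^ n) := ⟨_, fun _ => rfl⟩
  have hqn : ∀ n : ℕ, (0:ℝ) < q ^ n := fun n => pow_pos hq0 n
  have hpts : ∀ n : ℕ, 0 < η * q ^ (n+1) ∧ η * q ^ (n+1) < η * q ^ n ∧ η * q ^ n ≤ η := by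
    intro n
    refine ⟨by positivity, ?_, ?_⟩
    · have : q ^ (n+1) < q ^ n := by
        rw [pow_succ]
        nlinarith [hqn n]
      nlinarith
    · have h1 : q ^ n ≤ 1 := pow_le_one₀ hq0.le hq1.le
      nlinarith
  have hAnn : ∀ n : ℕ, 0 ≤ A n := fun n => by
    rw [hA]; exact hφ_nonneg _ (lt_trans (hpts n).1 (hpts n).2.1)
  have hstep : ∀ n : ℕ, A n ≤ 2 * A (n + 1) := by
    intro n
    set a := η * q ^ (n+1) with hadef
    set b := η * q ^ n with hbdef
    obtain ⟨ha0, hab, hbη⟩ := hpts n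
    set B : ℝ := A n / (c * a) with hBdef
    have hB0 : 0 ≤ B := div_nonneg (hAnn n) (mul_pos hcpos ha0).le
    have hcalc : B * (b - a) = A n / 2 := by
      rw [hBdef, hadef, hbdef, pow_succ]
      exact calc_aux c (A n) (q ^ n) η q hcpos (hqn n).ne' hη.ne' hqdef
    have hdd : ∀ x ∈ Set.Ioo a b, ∀ d : ℝ, HasDerivAt Φ d x → d ≤ B := by
      intro x hx d hder
      have hxIoo : x ∈ Set.Ioo (0:ℝ) η := ⟨lt_trans ha0 hx.1, lt_of_lt_of_le hx.2 hbη⟩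
      have h1 := hkey x hxIoo d hder
      have h2 : φ x / (c * x) ≤ B := by
        rw [hBdef, hA n, ← hbdef]
        apply div_le_div₀ (hφ_nonneg b (lt_trans ha0 hab)) (hφ_mono x b hxIoo.1 hx.2.le hbη)
          (mul_pos hcpos ha0) (mul_le_mul_of_nonneg_left hx.1.le hcpos.le)
      linarith
    have hks := key_step Φ K hΦmono hΦlipW B hB0 a b hab.le hdd
    have hΦa : Φ a = A (n+1) := by
      rw [hΦeq a ha0 (le_trans hab.le hbη), hA (n+1), hadef]
    have hΦb : Φ b = A n := by
      rw [hΦeq b (lt_trans ha0 hab) hbη, hA n, hbdef]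
    rw [hΦa, hΦb, hcalc] at hks
    linarith
  have hwη : 0 < w η := hwpos η hη
  have hgeo : ∀ n : ℕ, w η * (1/2) ^ n ≤ A n := by
    intro n
    induction n with
    | zero =>
      have h0 : A 0 = w η := by
        rw [hA 0, pow_zero, mul_one, hφη]
      rw [h0]; simp
    | succ m ih =>
      have := hstep m
      rw [pow_succ]
      nlinarith
  have hqtend : Tendsto (fun n : ℕ => q ^ n) atTop (nhds 0) :=
    tendsto_pow_atTop_nhds_zero_of_lt_one hq0.le hq1
  have hlow : ∀ r : ℝ, 0 < r → r ≤ η → ∃ n : ℕ, r ≤ η * q ^ n ∧ η * q ^ (n+1) < r := by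
    intro r hr hrη
    have htend : Tendsto (fun n : ℕ => η * q ^ (n+1)) atTop (nhds 0) := by
      have h2 := hqtend.const_mul (η * q)
      rw [mul_zero] at h2
      refine h2.congr ?_
      intro n
      rw [pow_succ]; ring
    have hex : ∃ n : ℕ, η * q ^ (n+1) < r := (htend.eventually_lt_const hr).exists
    refine ⟨Nat.find hex, ?_, Nat.find_spec hex⟩
    rcases Nat.eq_zero_or_pos (Nat.find hex) with h0 | h0
    · rw [h0]; simpa using hrη
    · obtain ⟨m, hm⟩ := Nat.exists_eq_succ_of_ne_zero (Nat.pos_iff_ne_zero.1 h0)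
      have := Nat.find_min hex (by omega : m < Nat.find hex)
      push_neg at this
      rw [hm]
      exact this
  -- final contradiction using infinite-order vanishing
  obtain ⟨C, hC, ρ, hρpos, hρ0, hρ⟩ := hvan
  obtain ⟨m₀, hm₀⟩ : ∃ m : ℕ, q ^ m ≤ (1/4 : ℝ) :=
    ⟨_, (hqtend.eventually_lt_const (by norm_num : (0:ℝ) < 1/4)).exists.choose_spec.le⟩
  obtain ⟨N, hN⟩ : ∃ N : ℕ, C * η ^ m₀ * (1/2) ^ N < w η / 2 := by
    have h0 : Tendsto (fun n : ℕ => C * η ^ m₀ * (1/2) ^ n) atTop (nhds 0) := by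
      have h1 := (tendsto_pow_atTop_nhds_zero_of_lt_one (by norm_num : (0:ℝ) ≤ 1/2)
        (by norm_num)).const_mul (C * η ^ m₀)
      rw [mul_zero] at h1
      exact h1
    exact (h0.eventually_lt_const (by positivity)).exists
  set δ : ℝ := min (η * q ^ N) 1 with hδdef
  have hδ : 0 < δ := lt_min (by positivity) one_pos
  obtain ⟨j, hjδ, hjge⟩ := ((hρ0.eventually_lt_const hδ).and (eventually_ge_atTop m₀)).exists
  set r : ℝ := ρ j with hrdef
  have hr0 : 0 < r := hρpos j
  have hr1 : r ≤ 1 := (lt_of_lt_of_le hjδ (min_le_right _ _)).le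
  have hrN : r < η * q ^ N := lt_of_lt_of_le hjδ (min_le_left _ _)
  have hrη : r ≤ η := by
    have h1 : η * q ^ N ≤ η := by
      have := pow_le_one₀ hq0.le hq1.le (n := N)
      nlinarith
    linarith
  obtain ⟨n, hup, hlo⟩ := hlow r hr0 hrη
  have hnN : N ≤ n := by
    by_contra hlt
    push_neg at hlt
    have h1 : q ^ N ≤ q ^ (n+1) := pow_le_pow_of_le_one hq0.le hq1.le (by omega)
    have h2 : η * q ^ N ≤ η * q ^ (n+1) := by nlinarith
    linarith
  have h1 : w η * (1/2) ^ (n+1) ≤ φ r := by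
    have ha0 := (hpts n).1
    have := hφ_mono (η * q ^ (n+1)) r ha0 hlo.le hrη
    have h2 := hgeo (n+1)
    calc w η * (1/2) ^ (n+1) ≤ A (n+1) := h2
      _ = φ (η * q ^ (n+1)) := hA (n+1)
      _ ≤ φ r := this
  have h2 : φ r ≤ w r := hφ_le r hr0 hrη
  have h3 : w r ≤ C * r ^ j := hρ j
  have h4 : r ^ j ≤ r ^ m₀ := pow_le_pow_of_le_one hr0.le hr1 hjge
  have h5 : r ^ m₀ ≤ (η * q ^ n) ^ m₀ := pow_le_pow_left₀ hr0.le hup m₀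
  have h6 : (η * q ^ n) ^ m₀ = η ^ m₀ * (q ^ m₀) ^ n := by
    rw [mul_pow, ← pow_mul, mul_comm n m₀, pow_mul]
  have h7 : (q ^ m₀) ^ n ≤ ((1:ℝ)/4) ^ n := pow_le_pow_left₀ (by positivity) hm₀ n
  have h8 : w η * (1/2) ^ (n+1) ≤ C * η ^ m₀ * ((1/4:ℝ)) ^ n := by
    have hη0 : (0:ℝ) ≤ η ^ m₀ := by positivity
    calc w η * (1/2) ^ (n+1) ≤ φ r := h1
      _ ≤ w r := h2
      _ ≤ C * r ^ j := h3
      _ ≤ C * r ^ m₀ := by nlinarith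
      _ ≤ C * (η ^ m₀ * (q ^ m₀) ^ n) := by rw [← h6]; nlinarith
      _ ≤ C * (η ^ m₀ * ((1/4:ℝ)) ^ n) := by
          have := mul_le_mul_of_nonneg_left h7 (mul_nonneg hC.le hη0)
          nlinarith
      _ = C * η ^ m₀ * ((1/4:ℝ)) ^ n := by ring
  have hp : (0:ℝ) < (1/2) ^ n := by positivity
  have h11 : w η / 2 ≤ C * η ^ m₀ * (1/2) ^ n := by
    have h9 : ((1/4:ℝ)) ^ n = (1/2) ^ n * (1/2) ^ n := by
      rw [← mul_pow]; norm_num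
    have h8' : w η * ((1/2:ℝ) ^ n * (1/2)) ≤ C * η ^ m₀ * ((1/2) ^ n * (1/2) ^ n) := by
      rw [← h9]
      calc w η * ((1/2:ℝ) ^ n * (1/2)) = w η * (1/2) ^ (n+1) := by rw [pow_succ]
        _ ≤ C * η ^ m₀ * ((1/4:ℝ)) ^ n := h8
    apply le_of_mul_le_mul_right _ hp
    nlinarith [h8']
  have h12 : C * η ^ m₀ * (1/2) ^ n ≤ C * η ^ m₀ * (1/2) ^ N := by
    have := pow_le_pow_of_le_one (by norm_num : (0:ℝ) ≤ 1/2) (by norm_num) hnN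
    have hCη : (0:ℝ) ≤ C * η ^ m₀ := by positivity
    nlinarith
  linarith
end

section
/- Let 0 < η ≤ ∞, 1 ≤ q < ∞, and let w : (0,∞) → (0,∞) be locally Lipschitz, nondecreasing, with lim_{t→0+} w(t) = 0. Then for every compactly supported C¹ function u on (0,η): ∫₀^η |u'(t)| w(t) dt ≥ ( ∫₀^η |u(t)|^q |(w(t)^q)'| dt )^{1/q}, where (w^q)' is the a.e. derivative. -/
open MeasureTheory Set Filter Topology
open scoped ENNReal

/-- For monotone continuous `W`, the derivative is a.e. nonnegative, locally integrable,
and its integral over `Ioc a s` is at most `W s - W a`. -/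
lemma mono_deriv_facts (W : ℝ → ℝ) (hW : Monotone W) (hWc : Continuous W) :
    (∀ᵐ x, 0 ≤ deriv W x) ∧ (∀ a b : ℝ, IntegrableOn (deriv W) (Set.Ioc a b)) ∧
      (∀ a s : ℝ, a ≤ s → ∫ x in Set.Ioc a s, deriv W x ≤ W s - W a) := by
  set μ := hW.stieltjesFunction.measure with hμdef
  have hst : ∀ x, hW.stieltjesFunction x = W x := by
    intro x
    rw [hW.stieltjesFunction_eq]
    exact rightLim_eq_of_tendsto (h := nhdsGT_neBot x)
      ((hWc.tendsto x).mono_left nhdsWithin_le_nhds)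
  have hμIoc : ∀ x y : ℝ, μ (Set.Ioc x y) = ENNReal.ofReal (W y - W x) := by
    intro x y
    rw [hμdef, StieltjesFunction.measure_Ioc, hst, hst]
  have hae : ∀ᵐ x, deriv W x = (μ.rnDeriv volume x).toReal :=
    hW.ae_hasDerivAt.mono fun x hx => hx.deriv
  refine ⟨?_, ?_, ?_⟩
  · filter_upwards [hae] with x hx
    rw [hx]; exact ENNReal.toReal_nonneg
  · intro a b
    have h1 : IntegrableOn (fun x => (μ.rnDeriv volume x).toReal) (Set.Ioc a b) :=
      Measure.integrableOn_toReal_rnDeriv (by rw [hμIoc]; exact ENNReal.ofReal_ne_top)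
    exact h1.congr_fun_ae (ae_restrict_of_ae (hae.mono fun x hx => hx.symm))
  · intro a s has
    calc ∫ x in Set.Ioc a s, deriv W x
        = ∫ x in Set.Ioc a s, (μ.rnDeriv volume x).toReal :=
          integral_congr_ae (ae_restrict_of_ae hae)
      _ ≤ (μ (Set.Ioc a s)).toReal :=
          Measure.setIntegral_toReal_rnDeriv_le (by rw [hμIoc]; exact ENNReal.ofReal_ne_top)
      _ ≤ W s - W a := by
          rw [hμIoc, ENNReal.toReal_ofReal (by linarith [hW has])]

/-- Swapping the order of integration for a triangular region. -/
lemma swap_aux {a b : ℝ} (g h : ℝ → ℝ) (hgm : Measurable g)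
    (hg : ∀ x y : ℝ, IntegrableOn g (Set.Ioc x y)) (hh : Continuous h) :
    ∫ t in Set.Ioc a b, (∫ s in Set.Ioc t b, h s) * g t =
      ∫ s in Set.Ioc a b, h s * ∫ t in Set.Ioc a s, g t := by
  set F : ℝ → ℝ → ℝ := fun t s =>
    Set.indicator {p : ℝ × ℝ | p.1 < p.2} (fun p => h p.2 * g p.1) (t, s) with hF
  have hFm : Measurable (Function.uncurry F) := by
    apply Measurable.indicator
    · exact (hh.measurable.comp measurable_snd).mul (hgm.comp measurable_fst)
    · exact measurableSet_lt measurable_fst measurable_snd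
  have hFint : Integrable (Function.uncurry F)
      ((volume.restrict (Set.Ioc a b)).prod (volume.restrict (Set.Ioc a b))) := by
    refine Integrable.mono' (g := fun p : ℝ × ℝ => |g p.1| * |h p.2|)
      ?_ hFm.aestronglyMeasurable ?_
    · exact Integrable.mul_prod ((hg a b).abs) ((hh.abs).integrableOn_Ioc)
    · refine ae_of_all _ fun p => ?_
      by_cases hp : p.1 < p.2
      · simp only [Function.uncurry, hF, Set.indicator_of_mem (by exact hp :
          (p.1, p.2) ∈ {p : ℝ × ℝ | p.1 < p.2})]
        rw [Real.norm_eq_abs, abs_mul]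
        exact le_of_eq (mul_comm _ _)
      · simp only [Function.uncurry, hF, Set.indicator_of_notMem (by exact hp :
          (p.1, p.2) ∉ {p : ℝ × ℝ | p.1 < p.2})]
        simp [abs_nonneg, mul_nonneg]
  have hswap := integral_integral_swap hFint
  have hleft : (∫ t in Set.Ioc a b, ∫ s in Set.Ioc a b, F t s) =
      ∫ t in Set.Ioc a b, (∫ s in Set.Ioc t b, h s) * g t := by
    refine setIntegral_congr_fun measurableSet_Ioc fun t ht => ?_
    have h1 : (fun s => F t s) = fun s => (Set.Ioi t).indicator h s * g t := by
      funext s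
      by_cases hts : t < s
      · simp [hF, Set.indicator_of_mem, hts, Set.mem_Ioi, mul_comm]
      · simp [hF, Set.indicator_of_notMem, hts, Set.mem_Ioi]
    rw [h1, integral_mul_const, setIntegral_indicator measurableSet_Ioi,
      Set.Ioc_inter_Ioi, max_eq_right ht.1.le]
  have hright : (∫ s in Set.Ioc a b, ∫ t in Set.Ioc a b, F t s) =
      ∫ s in Set.Ioc a b, h s * ∫ t in Set.Ioc a s, g t := by
    refine setIntegral_congr_fun measurableSet_Ioc fun s hs => ?_
    have h1 : (fun t => F t s) = fun t => h s * (Set.Iio s).indicator g t := by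
      funext t
      by_cases hts : t < s
      · simp [hF, Set.indicator_of_mem, hts, Set.mem_Iio]
      · simp [hF, Set.indicator_of_notMem, hts, Set.mem_Iio]
    have h2 : Set.Ioc a b ∩ Set.Iio s = Set.Ioo a s := by
      ext x
      simp only [Set.mem_inter_iff, Set.mem_Ioc, Set.mem_Iio, Set.mem_Ioo]
      exact ⟨fun ⟨⟨h1', _⟩, h3⟩ => ⟨h1', h3⟩, fun ⟨h1', h3⟩ => ⟨⟨h1', h3.le.trans hs.2⟩, h3⟩⟩
    rw [h1, integral_const_mul, setIntegral_indicator measurableSet_Iio, h2,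
      ← integral_Ioc_eq_integral_Ioo]
  rw [← hleft, ← hright]
  exact hswap

theorem stmt17 (η : ℝ≥0∞) (hη : 0 < η) (q : ℝ) (hq : 1 ≤ q)
    (w : ℝ → ℝ) (hwpos : ∀ t : ℝ, 0 < t → 0 < w t)
    (hwlip : ∀ a b : ℝ, 0 < a → ∃ K : NNReal, LipschitzOnWith K w (Set.Icc a b))
    (hwmono : MonotoneOn w (Set.Ioi 0))
    (hw0 : Tendsto w (nhdsWithin 0 (Set.Ioi 0)) (nhds 0))
    (u : ℝ → ℝ) (hu : ContDiff ℝ 1 u) (husupp : HasCompactSupport u)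
    (husub : tsupport u ⊆ {t : ℝ | 0 < t ∧ ENNReal.ofReal t < η}) :
    ∫ t in {t : ℝ | 0 < t ∧ ENNReal.ofReal t < η}, |deriv u t| * w t ≥
      (∫ t in {t : ℝ | 0 < t ∧ ENNReal.ofReal t < η},
        |u t| ^ q * |deriv (fun s => w s ^ q) t|) ^ (1 / q) := by
  have hq0 : (0 : ℝ) < q := lt_of_lt_of_le one_pos hq
  have hq1 : (0 : ℝ) ≤ q - 1 := by linarith
  have hucont : Continuous u := hu.continuous
  have hu' : Continuous (deriv u) := hu.continuous_deriv le_rfl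
  have hudiff : Differentiable ℝ u := hu.differentiable one_ne_zero
  set D : Set ℝ := {t : ℝ | 0 < t ∧ ENNReal.ofReal t < η} with hDdef
  have hD_meas : MeasurableSet D := by
    have : D = Set.Ioi 0 ∩ ENNReal.ofReal ⁻¹' Set.Iio η := by
      ext t; simp [hDdef, Set.mem_Ioi, Set.mem_Iio]
    rw [this]
    exact measurableSet_Ioi.inter (ENNReal.measurable_ofReal measurableSet_Iio)
  rw [ge_iff_le]
  by_cases hS : (tsupport u).Nonempty
  swap
  · have hsupp_empty : tsupport u = ∅ := Set.not_nonempty_iff_eq_empty.mp hS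
    have hu0 : ∀ t, u t = 0 := fun t =>
      image_eq_zero_of_notMem_tsupport (by rw [hsupp_empty]; exact Set.notMem_empty t)
    have hueq : u = fun _ => (0 : ℝ) := funext hu0
    have hd0 : ∀ t, deriv u t = 0 := by rw [hueq]; intro t; simp
    have h1 : (∫ t in D, |deriv u t| * w t) = 0 := by simp [hd0]
    have h2 : (∫ t in D, |u t| ^ q * |deriv (fun s => w s ^ q) t|) = 0 := by
      rw [hueq]; simp [Real.zero_rpow hq0.ne']
    rw [h1, h2, Real.zero_rpow (one_div_ne_zero hq0.ne')]
  -- main case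
  have hSc : IsCompact (tsupport u) := husupp
  have hcmem : sInf (tsupport u) ∈ tsupport u := hSc.sInf_mem hS
  have hTmem : sSup (tsupport u) ∈ tsupport u := hSc.sSup_mem hS
  set c := sInf (tsupport u) with hcdef
  set T := sSup (tsupport u) with hTdef
  have hc0 : 0 < c := (husub hcmem).1
  have hT0 : 0 < T := (husub hTmem).1
  have hTη : ENNReal.ofReal T < η := (husub hTmem).2
  obtain ⟨b, hb0, hTb', hbη⟩ := ENNReal.lt_iff_exists_real_btwn.mp hTη
  have hTb : T < b := by
    have := (ENNReal.ofReal_lt_ofReal_iff_of_nonneg hT0.le).mp hTb'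
    exact this
  set a := c / 2 with hadef
  have ha0 : 0 < a := by positivity
  have hac : a < c := by simp [hadef]; linarith
  have hcT : c ≤ T := csInf_le_csSup hS hSc.bddBelow hSc.bddAbove
  have hab : a < b := by linarith
  have hSsub : tsupport u ⊆ Set.Ioo a b := fun x hx =>
    ⟨lt_of_lt_of_le hac (csInf_le hSc.bddBelow hx),
      lt_of_le_of_lt (le_csSup hSc.bddAbove hx) hTb⟩
  have hIab : Set.Icc a b ⊆ Set.Ioi 0 := fun x hx => lt_of_lt_of_le ha0 hx.1
  have hu_zero : ∀ t, t ∉ Set.Ioo a b → u t = 0 := fun t ht =>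
    image_eq_zero_of_notMem_tsupport fun hts => ht (hSsub hts)
  have hu'_zero : ∀ t, t ∉ Set.Ioo a b → deriv u t = 0 := by
    intro t ht
    by_contra hne
    exact ht (hSsub (support_deriv_subset (Function.mem_support.mpr hne)))
  have hIooD : Set.Ioo a b ⊆ D := by
    intro t ht
    refine ⟨lt_trans ha0 ht.1, lt_of_le_of_lt (ENNReal.ofReal_le_ofReal ht.2.le) hbη⟩
  -- the clamped weight
  set cl : ℝ → ℝ := fun t => min (max t a) b with hcldef
  have hcl_mem : ∀ t, cl t ∈ Set.Icc a b := fun t =>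
    ⟨le_min (le_max_right _ _) hab.le, min_le_right _ _⟩
  have hcl_cont : Continuous cl := (continuous_id.max continuous_const).min continuous_const
  have hcl_mono : Monotone cl := ((monotone_id.max monotone_const).min monotone_const)
  have hcl_eq : ∀ t ∈ Set.Icc a b, cl t = t := fun t ht => by
    simp only [hcldef]; rw [max_eq_left ht.1, min_eq_left ht.2]
  set ww : ℝ → ℝ := fun t => w (cl t) with hwwdef
  have hww_pos : ∀ t, 0 < ww t := fun t => hwpos _ (hIab (hcl_mem t))
  have hww_mono : Monotone ww := fun x y hxy =>
    hwmono (hIab (hcl_mem x)) (hIab (hcl_mem y)) (hcl_mono hxy)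
  have hww_cont : Continuous ww := by
    obtain ⟨K, hK⟩ := hwlip a b ha0
    exact hK.continuousOn.comp_continuous hcl_cont hcl_mem
  have hww_eq : ∀ t ∈ Set.Icc a b, ww t = w t := fun t ht => by
    simp only [hwwdef, hcl_eq t ht]
  set W : ℝ → ℝ := fun t => ww t ^ q with hWdef
  have hrpow_cont : Continuous fun x : ℝ => x ^ q :=
    continuous_iff_continuousAt.mpr fun x => Real.continuousAt_rpow_const x q (Or.inr hq0.le)
  have hrpow_cont' : Continuous fun x : ℝ => x ^ (q - 1) :=
    continuous_iff_continuousAt.mpr fun x => Real.continuousAt_rpow_const x _ (Or.inr hq1)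
  have hW_mono : Monotone W := fun x y hxy =>
    Real.rpow_le_rpow (hww_pos x).le (hww_mono hxy) hq0.le
  have hW_cont : Continuous W := hrpow_cont.comp hww_cont
  have hW_pos : ∀ t, 0 < W t := fun t => Real.rpow_pos_of_pos (hww_pos t) q
  set g : ℝ → ℝ := deriv W with hgdef
  obtain ⟨hg_ae, hg_int, hg_le⟩ := mono_deriv_facts W hW_mono hW_cont
  have hg_meas : Measurable g := measurable_deriv W
  have hgw : ∀ t ∈ Set.Ioo a b, deriv (fun s => w s ^ q) t = g t := by
    intro t ht
    apply Filter.EventuallyEq.deriv_eq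
    filter_upwards [Ioo_mem_nhds ht.1 ht.2] with x hx
    rw [← hww_eq x (Set.Ioo_subset_Icc_self hx)]
  -- the function v
  set v : ℝ → ℝ := fun t => ∫ s in t..b, |deriv u s| with hvdef
  have hv_eq : v = fun t => -∫ s in b..t, |deriv u s| := by
    funext t
    simp only [hvdef]
    rw [intervalIntegral.integral_symm]
  have hv_deriv : ∀ t, HasDerivAt v (-|deriv u t|) t := by
    intro t
    rw [hv_eq]
    exact ((hu'.abs.integral_hasStrictDerivAt b t).hasDerivAt).neg
  have hv_cont : Continuous v := by
    apply continuous_iff_continuousAt.mpr fun t => (hv_deriv t).continuousAt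
  have hv_nonneg : ∀ t, t ≤ b → 0 ≤ v t := fun t ht =>
    intervalIntegral.integral_nonneg ht fun x _ => abs_nonneg _
  have hvb : v b = 0 := by simp [hvdef]
  have hub : u b = 0 := hu_zero b fun hb => lt_irrefl b hb.2
  have huv : ∀ t ∈ Set.Icc a b, |u t| ≤ v t := by
    intro t ht
    have hftc : ∫ s in t..b, deriv u s = u b - u t :=
      intervalIntegral.integral_deriv_eq_sub (fun x _ => hudiff x)
        (hu'.intervalIntegrable _ _)
    have h1 : |u t| = |∫ s in t..b, deriv u s| := by
      rw [hftc, hub, zero_sub, abs_neg]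
    rw [h1]
    exact intervalIntegral.abs_integral_le_integral_abs ht.2
  -- the function h
  set h : ℝ → ℝ := fun s => q * v s ^ (q - 1) * |deriv u s| with hhdef
  have hh_cont : Continuous h :=
    (continuous_const.mul (hrpow_cont'.comp hv_cont)).mul hu'.abs
  have hh_nonneg : ∀ s, s ≤ b → 0 ≤ h s := fun s hs =>
    mul_nonneg (mul_nonneg hq0.le (Real.rpow_nonneg (hv_nonneg s hs) _)) (abs_nonneg _)
  have hvq_deriv : ∀ s, HasDerivAt (fun x => v x ^ q) (-h s) s := by
    intro s
    have h1 := (hv_deriv s).rpow_const (p := q) (Or.inr hq)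
    convert h1 using 1
    simp only [hhdef]
    ring
  have hvq : ∀ t ∈ Set.Icc a b, v t ^ q = ∫ s in t..b, h s := by
    intro t ht
    have h1 := intervalIntegral.integral_eq_sub_of_hasDerivAt
      (f := fun x => v x ^ q) (f' := fun s => -h s) (a := t) (b := b)
      (fun s _ => hvq_deriv s) ((hh_cont.neg).intervalIntegrable _ _)
    rw [intervalIntegral.integral_neg, hvb, Real.zero_rpow hq0.ne'] at h1
    linarith [h1]
  -- the function B
  set B : ℝ → ℝ := fun s => ∫ x in s..b, |deriv u x| * ww x with hBdef
  have hIw_cont : Continuous fun x => |deriv u x| * ww x := hu'.abs.mul hww_cont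
  have hB_eq : B = fun t => -∫ s in b..t, |deriv u s| * ww s := by
    funext t
    simp only [hBdef]
    rw [intervalIntegral.integral_symm]
  have hB_deriv : ∀ s, HasDerivAt B (-(|deriv u s| * ww s)) s := by
    intro s
    rw [hB_eq]
    exact ((hIw_cont.integral_hasStrictDerivAt b s).hasDerivAt).neg
  have hB_cont : Continuous B := continuous_iff_continuousAt.mpr fun t => (hB_deriv t).continuousAt
  have hB_nonneg : ∀ s, s ≤ b → 0 ≤ B s := fun s hs =>
    intervalIntegral.integral_nonneg hs fun x _ => mul_nonneg (abs_nonneg _) (hww_pos x).le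
  have hBb : B b = 0 := by simp [hBdef]
  have hvwB : ∀ s ∈ Set.Icc a b, v s * ww s ≤ B s := by
    intro s hs
    have h1 : v s * ww s = ∫ x in s..b, |deriv u x| * ww s := by
      simp only [hvdef]
      rw [intervalIntegral.integral_mul_const]
    rw [h1]
    refine intervalIntegral.integral_mono_on hs.2 ((hu'.abs.mul continuous_const).intervalIntegrable _ _)
      (hIw_cont.intervalIntegrable _ _) fun x hx => ?_
    exact mul_le_mul_of_nonneg_left (hww_mono hx.1) (abs_nonneg _)
  have hBq_deriv : ∀ s, HasDerivAt (fun x => B x ^ q)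
      (-(q * B s ^ (q - 1) * (|deriv u s| * ww s))) s := by
    intro s
    have h1 := (hB_deriv s).rpow_const (p := q) (Or.inr hq)
    convert h1 using 1
    ring
  set A : ℝ := ∫ s in a..b, |deriv u s| * ww s with hAdef
  have hAB : A = B a := rfl
  have hA_nonneg : 0 ≤ A :=
    intervalIntegral.integral_nonneg hab.le fun x _ => mul_nonneg (abs_nonneg _) (hww_pos x).le
  have hBA : ∫ s in a..b, q * B s ^ (q - 1) * (|deriv u s| * ww s) = A ^ q := by
    have h1 := intervalIntegral.integral_eq_sub_of_hasDerivAt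
      (f := fun x => B x ^ q) (f' := fun s => -(q * B s ^ (q - 1) * (|deriv u s| * ww s)))
      (a := a) (b := b) (fun s _ => hBq_deriv s)
      ((((continuous_const.mul (hrpow_cont'.comp hB_cont)).mul hIw_cont).neg).intervalIntegrable _ _)
    rw [intervalIntegral.integral_neg, hBb, Real.zero_rpow hq0.ne'] at h1
    rw [hAB]
    linarith [h1]
  -- integrability
  obtain ⟨C1, hC1⟩ : ∃ C, ∀ x ∈ Set.Icc a b, ‖v x ^ q‖ ≤ C :=
    isCompact_Icc.exists_bound_of_continuousOn (hrpow_cont.comp hv_cont).continuousOn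
  obtain ⟨C2, hC2⟩ : ∃ C, ∀ x ∈ Set.Icc a b, ‖|u x| ^ q‖ ≤ C :=
    isCompact_Icc.exists_bound_of_continuousOn ((hrpow_cont.comp hucont.abs)).continuousOn
  have hmeas_uq : AEStronglyMeasurable (fun t => |u t| ^ q) (volume.restrict (Set.Ioc a b)) :=
    ((hrpow_cont.comp hucont.abs)).aestronglyMeasurable.restrict
  have hmeas_vq : AEStronglyMeasurable (fun t => v t ^ q) (volume.restrict (Set.Ioc a b)) :=
    ((hrpow_cont.comp hv_cont)).aestronglyMeasurable.restrict
  have hae_Icc : ∀ᵐ t ∂(volume.restrict (Set.Ioc a b)), t ∈ Set.Icc a b := by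
    filter_upwards [ae_restrict_mem measurableSet_Ioc] with t ht
    exact ⟨ht.1.le, ht.2⟩
  have hint_uqg : IntegrableOn (fun t => |u t| ^ q * g t) (Set.Ioc a b) :=
    Integrable.bdd_mul (hg_int a b) hmeas_uq
      (by filter_upwards [hae_Icc] with t ht; exact hC2 t ht)
  have hint_vqg : IntegrableOn (fun t => v t ^ q * g t) (Set.Ioc a b) :=
    Integrable.bdd_mul (hg_int a b) hmeas_vq
      (by filter_upwards [hae_Icc] with t ht; exact hC1 t ht)
  set I₁ : ℝ := ∫ t in Set.Ioc a b, |u t| ^ q * g t with hI1def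
  have hg_ae' : ∀ᵐ t ∂(volume.restrict (Set.Ioc a b)), 0 ≤ g t := ae_restrict_of_ae hg_ae
  have step1 : I₁ ≤ ∫ t in Set.Ioc a b, v t ^ q * g t := by
    refine integral_mono_ae hint_uqg hint_vqg ?_
    filter_upwards [hae_Icc, hg_ae'] with t ht hgt
    exact mul_le_mul_of_nonneg_right
      (Real.rpow_le_rpow (abs_nonneg _) (huv t ht) hq0.le) hgt
  have step2 : ∫ t in Set.Ioc a b, v t ^ q * g t
      = ∫ t in Set.Ioc a b, (∫ s in Set.Ioc t b, h s) * g t := by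
    refine setIntegral_congr_fun measurableSet_Ioc fun t ht => ?_
    rw [hvq t ⟨ht.1.le, ht.2⟩, intervalIntegral.integral_of_le ht.2]
  have step3 : ∫ t in Set.Ioc a b, (∫ s in Set.Ioc t b, h s) * g t
      = ∫ s in Set.Ioc a b, h s * ∫ t in Set.Ioc a s, g t :=
    swap_aux g h hg_meas hg_int hh_cont
  have hG_cont : Continuous fun s => ∫ t in a..s, g t :=
    intervalIntegral.continuous_primitive
      (fun x y => (intervalIntegrable_iff).mpr (hg_int _ _)) a
  have step4 : ∫ s in Set.Ioc a b, h s * ∫ t in Set.Ioc a s, g t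
      = ∫ s in Set.Ioc a b, h s * ∫ t in a..s, g t := by
    refine setIntegral_congr_fun measurableSet_Ioc fun s hs => ?_
    rw [intervalIntegral.integral_of_le hs.1.le]
  have step5 : ∫ s in Set.Ioc a b, h s * ∫ t in a..s, g t
      ≤ ∫ s in Set.Ioc a b, h s * W s := by
    refine setIntegral_mono_on ((hh_cont.mul hG_cont).integrableOn_Ioc)
      ((hh_cont.mul hW_cont).integrableOn_Ioc) measurableSet_Ioc fun s hs => ?_
    refine mul_le_mul_of_nonneg_left ?_ (hh_nonneg s hs.2)
    rw [intervalIntegral.integral_of_le hs.1.le]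
    calc ∫ t in Set.Ioc a s, g t ≤ W s - W a := hg_le a s hs.1.le
      _ ≤ W s := by linarith [hW_pos a]
  have step6 : ∫ s in Set.Ioc a b, h s * W s
      ≤ ∫ s in Set.Ioc a b, q * B s ^ (q - 1) * (|deriv u s| * ww s) := by
    refine setIntegral_mono_on ((hh_cont.mul hW_cont).integrableOn_Ioc)
      (((continuous_const.mul (hrpow_cont'.comp hB_cont)).mul hIw_cont).integrableOn_Ioc)
      measurableSet_Ioc fun s hs => ?_
    have hsb : s ≤ b := hs.2
    have hsIcc : s ∈ Set.Icc a b := ⟨hs.1.le, hs.2⟩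
    have hww1 : ww s ^ q = ww s ^ (1 : ℝ) * ww s ^ (q - 1) := by
      rw [← Real.rpow_add (hww_pos s)]; norm_num
    have hmul : (v s * ww s) ^ (q - 1) = v s ^ (q - 1) * ww s ^ (q - 1) :=
      Real.mul_rpow (hv_nonneg s hsb) (hww_pos s).le
    have e1 : h s * W s = (q * |deriv u s| * ww s) * (v s * ww s) ^ (q - 1) := by
      simp only [hhdef, hWdef, hww1, hmul, Real.rpow_one]
      ring
    have e2 : q * B s ^ (q - 1) * (|deriv u s| * ww s)
        = (q * |deriv u s| * ww s) * B s ^ (q - 1) := by ring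
    rw [e1, e2]
    refine mul_le_mul_of_nonneg_left
      (Real.rpow_le_rpow (mul_nonneg (hv_nonneg s hsb) (hww_pos s).le) (hvwB s hsIcc) hq1)
      (mul_nonneg (mul_nonneg hq0.le (abs_nonneg _)) (hww_pos s).le)
  have step7 : ∫ s in Set.Ioc a b, q * B s ^ (q - 1) * (|deriv u s| * ww s) = A ^ q := by
    rw [← intervalIntegral.integral_of_le hab.le]
    exact hBA
  have hI1Aq : I₁ ≤ A ^ q := by
    calc I₁ ≤ _ := step1
      _ = _ := step2
      _ = _ := step3
      _ = _ := step4
      _ ≤ _ := step5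
      _ ≤ _ := step6
      _ = A ^ q := step7
  have hI1_nonneg : 0 ≤ I₁ := by
    refine integral_nonneg_of_ae ?_
    filter_upwards [hg_ae'] with t hgt
    exact mul_nonneg (Real.rpow_nonneg (abs_nonneg _) _) hgt
  have hfinal : I₁ ^ (1 / q) ≤ A := by
    rw [one_div]
    calc I₁ ^ q⁻¹ ≤ (A ^ q) ^ q⁻¹ :=
        Real.rpow_le_rpow hI1_nonneg hI1Aq (by positivity)
      _ = A := Real.rpow_rpow_inv hA_nonneg hq0.ne'
  -- identify the goal integrals
  have hL : ∫ t in D, |deriv u t| * w t = A := by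
    have h0 : ∀ t, t ∉ Set.Ioo a b → |deriv u t| * w t = 0 := fun t ht => by
      rw [hu'_zero t ht, abs_zero, zero_mul]
    have hind : D.indicator (fun t => |deriv u t| * w t)
        = (Set.Ioo a b).indicator (fun t => |deriv u t| * w t) := by
      funext x
      by_cases hx : x ∈ Set.Ioo a b
      · rw [Set.indicator_of_mem hx, Set.indicator_of_mem (hIooD hx)]
      · rw [Set.indicator_of_notMem hx]
        by_cases hx2 : x ∈ D
        · rw [Set.indicator_of_mem hx2, h0 x hx]
        · rw [Set.indicator_of_notMem hx2]
    calc ∫ t in D, |deriv u t| * w t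
        = ∫ t in Set.Ioo a b, |deriv u t| * w t := by
          rw [← integral_indicator hD_meas, hind, integral_indicator measurableSet_Ioo]
      _ = ∫ t in Set.Ioc a b, |deriv u t| * w t := integral_Ioc_eq_integral_Ioo.symm
      _ = ∫ t in Set.Ioc a b, |deriv u t| * ww t := by
          refine setIntegral_congr_fun measurableSet_Ioc fun t ht => ?_
          rw [hww_eq t ⟨ht.1.le, ht.2⟩]
      _ = A := (intervalIntegral.integral_of_le hab.le).symm
  have hR : ∫ t in D, |u t| ^ q * |deriv (fun s => w s ^ q) t| = I₁ := by
    have h0 : ∀ t, t ∉ Set.Ioo a b → |u t| ^ q * |deriv (fun s => w s ^ q) t| = 0 :=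
      fun t ht => by rw [hu_zero t ht, abs_zero, Real.zero_rpow hq0.ne', zero_mul]
    have hind : D.indicator (fun t => |u t| ^ q * |deriv (fun s => w s ^ q) t|)
        = (Set.Ioo a b).indicator (fun t => |u t| ^ q * |deriv (fun s => w s ^ q) t|) := by
      funext x
      by_cases hx : x ∈ Set.Ioo a b
      · rw [Set.indicator_of_mem hx, Set.indicator_of_mem (hIooD hx)]
      · rw [Set.indicator_of_notMem hx]
        by_cases hx2 : x ∈ D
        · rw [Set.indicator_of_mem hx2, h0 x hx]
        · rw [Set.indicator_of_notMem hx2]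
    calc ∫ t in D, |u t| ^ q * |deriv (fun s => w s ^ q) t|
        = ∫ t in Set.Ioo a b, |u t| ^ q * |deriv (fun s => w s ^ q) t| := by
          rw [← integral_indicator hD_meas, hind, integral_indicator measurableSet_Ioo]
      _ = ∫ t in Set.Ioo a b, |u t| ^ q * |g t| := by
          refine setIntegral_congr_fun measurableSet_Ioo fun t ht => ?_
          rw [hgw t ht]
      _ = ∫ t in Set.Ioc a b, |u t| ^ q * |g t| := integral_Ioc_eq_integral_Ioo.symm
      _ = I₁ := by
          refine integral_congr_ae ?_
          filter_upwards [hg_ae'] with t hgt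
          rw [abs_of_nonneg hgt]
  rw [hL, hR]
  exact hfinal
end
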